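/- arXiv:1806.08816 — 6 statements merged into one kernel-verified Lean document; each statement's English description precedes it below -/
import Mathlib

section
/- Let α₁, …, α_R be real numbers, each strictly larger than 1, and let 𝒜 = {m·α_r : m a positive integer, r ∈ {1,…,R}}. Let (u_p)_{p≥1} be a sequence of positive real numbers such that u₁ ≥ 1, u_{p+1} ≥ u_p + 1 for all p ≥ 1, and u_p ∈ 𝒜 for every p ≥ 1. Then there exists a real number ε̄₀ > 0, depending only on α₁, …, α_R, such that u_p > (1 + ε̄₀)·p for all sufficiently large p. -/
lemma intCRT (m n a b : ℤ) (h : IsCoprime m n) : ∃ x : ℤ, m ∣ x - a ∧ n ∣ x - b := by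
  obtain ⟨u, v, huv⟩ := h
  exact ⟨b * (u * m) + a * (v * n), ⟨u * (b - a), by linear_combination a * huv⟩,
    ⟨v * (a - b), by linear_combination b * huv⟩⟩

lemma blockPrime (p : ℕ) (hp : p.Prime) (Q : ℕ) (hQ : Q ≠ 0) (w : ℤ) :
    ∃ τ : ℤ, ∀ t : ℤ, (p:ℤ) ∣ t - τ → ¬ ((p:ℤ) ^ (Q.factorization p + 1) ∣ w + (Q:ℤ) * t) := by
  set f := Q.factorization p with hf
  set q := Q / p ^ f with hq
  have hpq : ¬ (p:ℕ) ∣ q := Nat.not_dvd_ordCompl hp hQ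
  have hQeq : (Q:ℤ) = (p:ℤ) ^ f * (q:ℤ) := by
    rw [hq, hf]
    exact_mod_cast (Nat.ordProj_mul_ordCompl_eq_self Q p).symm
  have hpne : ((p:ℤ) ^ f) ≠ 0 := pow_ne_zero _ (by exact_mod_cast hp.pos.ne')
  by_cases hw : (p:ℤ) ^ f ∣ w
  · obtain ⟨w', rfl⟩ := hw
    haveI : Fact p.Prime := ⟨hp⟩
    have hqz : (q : ZMod p) ≠ 0 := by
      rw [Ne, ZMod.natCast_eq_zero_iff]; exact hpq
    set z : ZMod p := (1 - (w' : ZMod p)) * (q : ZMod p)⁻¹ with hz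
    refine ⟨(z.val : ℤ), fun t ht hdvd => ?_⟩
    have key : (p:ℤ) ∣ w' + q * t := by
      have h1 : (p:ℤ) ^ f * (w' + (q:ℤ) * t) = (p:ℤ)^f * w' + (Q:ℤ) * t := by rw [hQeq]; ring
      have h2 : (p:ℤ)^(f+1) ∣ (p:ℤ)^f * (w' + (q:ℤ)*t) := by rw [h1]; exact hdvd
      rw [pow_succ'] at h2
      rw [mul_comm ((p:ℤ)) ((p:ℤ)^f)] at h2
      exact (mul_dvd_mul_iff_left hpne).mp h2
    have hzm : ((w' + (q:ℤ) * t : ℤ) : ZMod p) = 0 :=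
      (ZMod.intCast_zmod_eq_zero_iff_dvd _ p).mpr key
    have htz : ((t : ℤ) : ZMod p) = ((z.val : ℤ) : ZMod p) := by
      have h := (ZMod.intCast_zmod_eq_zero_iff_dvd (t - (z.val:ℤ)) p).mpr ht
      push_cast at h ⊢
      linear_combination h
    have hvz : ((z.val : ℤ) : ZMod p) = z := by push_cast [ZMod.natCast_val]; rfl
    push_cast at hzm
    rw [htz] at hzm
    have hv2 : ((z.val : ℕ) : ZMod p) = z := by rw [ZMod.natCast_val, ZMod.cast_id]
    push_cast at hzm
    rw [hv2] at hzm
    have : (1 : ZMod p) = 0 := by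
      have hqzz : (q : ZMod p) * (q : ZMod p)⁻¹ = 1 := by
        field_simp
      calc (1 : ZMod p) = (w' : ZMod p) + (1 - (w' : ZMod p)) * ((q:ZMod p)⁻¹ * (q:ZMod p)) := by
            rw [mul_comm ((q:ZMod p)⁻¹), hqzz]; ring
        _ = (w' : ZMod p) + (q : ZMod p) * z := by rw [hz]; ring
        _ = 0 := hzm
    exact one_ne_zero this
  · refine ⟨0, fun t ht hdvd => hw ?_⟩
    have h1 : (p:ℤ) ^ f ∣ w + (Q:ℤ) * t := dvd_trans (pow_dvd_pow _ (Nat.le_succ f)) hdvd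
    have h2 : (p:ℤ) ^ f ∣ (Q:ℤ) * t := by rw [hQeq]; exact Dvd.dvd.mul_right (dvd_mul_right _ _) t
    have := dvd_sub h1 h2
    simpa using this

lemma crtFinset (ps : Finset ℕ) (hps : ∀ p ∈ ps, p.Prime) (τ : ℕ → ℤ) :
    ∃ x : ℤ, ∀ p ∈ ps, (p:ℤ) ∣ x - τ p := by
  classical
  induction ps using Finset.induction with
  | empty => exact ⟨0, by simp⟩
  | @insert p s hpns ih =>
    obtain ⟨x', hx'⟩ := ih (fun r hr => hps r (Finset.mem_insert_of_mem hr))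
    have hp : p.Prime := hps p (Finset.mem_insert_self _ _)
    have hcop : Nat.Coprime p (∏ r ∈ s, r) := by
      apply Nat.Coprime.prod_right
      intro r hr
      exact (Nat.coprime_primes hp (hps r (Finset.mem_insert_of_mem hr))).mpr
        (fun h => hpns (h ▸ hr))
    have hcop' : IsCoprime (p:ℤ) ((∏ r ∈ s, r : ℕ) : ℤ) :=
      Nat.isCoprime_iff_coprime.mpr hcop
    obtain ⟨x, hx1, hx2⟩ := intCRT _ _ (τ p) x' hcop'
    refine ⟨x, fun r hr => ?_⟩
    rcases Finset.mem_insert.mp hr with rfl | hr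
    · exact hx1
    · have h1 : (r:ℤ) ∣ x - x' := dvd_trans (by exact_mod_cast Finset.dvd_prod_of_mem _ hr) hx2
      have h2 := hx' r hr
      have := dvd_add h1 h2
      simpa using this

lemma ncLemma (Q : ℕ) (hQ : 0 < Q) (S : Finset ℕ) (hS : ∀ A ∈ S, Q < A) :
    ∃ P : ℕ, 0 < P ∧ ∀ w : ℤ, ∃ τ : ℕ, τ < P ∧ ∀ t : ℤ, (P:ℤ) ∣ t - (τ:ℤ) →
      ∀ A ∈ S, ¬ ((A:ℤ) ∣ w + (Q:ℤ) * t) := by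
  classical
  -- for each A ∈ S choose a prime p with factorization exceeding that of Q
  have hexists : ∀ A ∈ S, ∃ p : ℕ, p.Prime ∧ p ^ (Q.factorization p + 1) ∣ A := by
    intro A hA
    have hAQ : ¬ (A ∣ Q) := fun h => absurd (Nat.le_of_dvd hQ h) (not_le.mpr (hS A hA))
    have hA0 : A ≠ 0 := by have := hS A hA; omega
    have hnle : ¬ (A.factorization ≤ Q.factorization) := by
      rw [Nat.factorization_le_iff_dvd hA0 hQ.ne']
      exact hAQ
    rw [Finsupp.le_def] at hnle
    push_neg at hnle
    obtain ⟨p, hpgt⟩ := hnle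
    have hp : p.Prime := by
      by_contra hnp
      rw [Nat.factorization_eq_zero_of_not_prime A hnp] at hpgt
      omega
    exact ⟨p, hp, (hp.pow_dvd_iff_le_factorization hA0).mpr hpgt⟩
  choose pf hpf1 hpf2 using hexists
  set ps : Finset ℕ := S.attach.image (fun a => pf a.1 a.2) with hps
  have hpsprime : ∀ p ∈ ps, p.Prime := by
    intro p hp
    simp only [hps, Finset.mem_image] at hp
    obtain ⟨a, _, rfl⟩ := hp
    exact hpf1 a.1 a.2
  refine ⟨∏ p ∈ ps, p, Finset.prod_pos (fun p hp => (hpsprime p hp).pos), fun w => ?_⟩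
  choose τp hτp using fun p (hp : p ∈ ps) => blockPrime p (hpsprime p hp) Q hQ.ne' w
  obtain ⟨x, hx⟩ := crtFinset ps hpsprime (fun p => if hp : p ∈ ps then τp p hp else 0)
  set P : ℕ := ∏ p ∈ ps, p with hP
  have hPpos : (0:ℤ) < (P:ℤ) := by
    exact_mod_cast Finset.prod_pos (fun p hp => (hpsprime p hp).pos)
  refine ⟨(x % P).toNat, ?_, fun t ht A hA hdvd => ?_⟩
  · have h1 : x % P < P := Int.emod_lt_of_pos x hPpos
    omega
  · -- t ≡ x mod P, hence mod each p
    have htx : (P:ℤ) ∣ t - x := by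
      have h0 : ((x % (P:ℤ)).toNat : ℤ) = x % P := Int.toNat_of_nonneg (Int.emod_nonneg x hPpos.ne')
      rw [h0] at ht
      have h2 : (P:ℤ) ∣ x - x % P := ⟨x / P, by rw [Int.emod_def]; ring⟩
      have h3 := dvd_sub ht h2
      have h4 : t - x % (P:ℤ) - (x - x % (P:ℤ)) = t - x := by ring
      rwa [h4] at h3
    set p := pf A hA with hpdef
    have hpmem : p ∈ ps := by
      simp only [hps, Finset.mem_image]
      exact ⟨⟨A, hA⟩, Finset.mem_attach _ _, rfl⟩
    have hpdvdP : (p:ℤ) ∣ (P:ℤ) := by exact_mod_cast Finset.dvd_prod_of_mem _ hpmem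
    have ht1 : (p:ℤ) ∣ t - τp p hpmem := by
      have h1 : (p:ℤ) ∣ t - x := dvd_trans hpdvdP htx
      have h2 := hx p hpmem
      rw [dif_pos hpmem] at h2
      have := dvd_add h1 h2
      simpa using this
    have hblock := hτp p hpmem t ht1
    apply hblock
    refine dvd_trans ?_ hdvd
    exact_mod_cast hpf2 A hA

lemma int_eq_of_abs_lt_one {a b : ℤ} (h : |((a - b : ℤ) : ℝ)| < 1) : a = b := by
  rw [← Int.cast_abs] at h
  have h2 : |a - b| < 1 := by exact_mod_cast h
  rcases abs_lt.mp h2 with ⟨h3, h4⟩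
  omega

set_option maxHeartbeats 2000000 in
/-- Arithmetic lemma: if `u` is a sequence of positive reals with `u 1 ≥ 1`,
gaps at least `1`, and each `u p` is a positive integer multiple of some `α r`
with all `α r > 1`, then there is `ε̄₀ > 0` (depending only on the `α r`) with
`u p > (1 + ε̄₀) * p` for all large `p`. -/
theorem stmt0 (R : ℕ) (α : Fin R → ℝ) (hα : ∀ r, 1 < α r) :
    ∃ ε : ℝ, 0 < ε ∧ ∀ u : ℕ → ℝ,
      (∀ p, 1 ≤ p → 0 < u p) →
      1 ≤ u 1 →
      (∀ p, 1 ≤ p → u p + 1 ≤ u (p + 1)) →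
      (∀ p, 1 ≤ p → ∃ (m : ℕ) (r : Fin R), 0 < m ∧ u p = m * α r) →
      ∀ᶠ p : ℕ in Filter.atTop, (1 + ε) * p < u p := by
  classical
  obtain rfl | hR := Nat.eq_zero_or_pos R
  · exact ⟨1, one_pos, fun u _ _ _ hrep => by
      obtain ⟨m, r, _⟩ := hrep 1 le_rfl; exact r.elim0⟩
  haveI : Nonempty (Fin R) := ⟨⟨0, hR⟩⟩
  -- common denominator Q
  set den : Fin R → ℕ := fun r =>
    if h : ∃ b : ℕ, 0 < b ∧ ∃ a : ℕ, (b:ℝ) * α r = a then h.choose else 1 with hden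
  set Q : ℕ := ∏ r, den r with hQdef
  have hdenpos : ∀ r, 0 < den r := by
    intro r
    rw [hden]
    dsimp only
    split
    · next h => exact h.choose_spec.1
    · exact one_pos
  have hQpos : 0 < Q := Finset.prod_pos (fun r _ => hdenpos r)
  have hQprop : ∀ r : Fin R, (∃ k d : ℕ, 0 < k ∧ (k:ℝ) * α r = d) →
      ∃ A : ℕ, (A:ℝ) = Q * α r := by
    rintro r ⟨k, d, hk, hkd⟩
    have hex : ∃ b : ℕ, 0 < b ∧ ∃ a : ℕ, (b:ℝ) * α r = a := ⟨k, hk, d, hkd⟩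
    have hdr : den r = hex.choose := by rw [hden]; dsimp only; rw [dif_pos hex]
    obtain ⟨hbpos, a, ha⟩ := hex.choose_spec
    have ha' : ((den r : ℕ):ℝ) * α r = a := by rw [hdr]; exact ha
    have hdvd : den r ∣ Q := Finset.dvd_prod_of_mem den (Finset.mem_univ r)
    refine ⟨(Q / den r) * a, ?_⟩
    have hQd : ((Q / den r : ℕ):ℝ) * (den r : ℝ) = Q := by
      exact_mod_cast congrArg (Nat.cast : ℕ → ℝ) (Nat.div_mul_cancel hdvd)
    push_cast
    calc ((Q / den r : ℕ):ℝ) * a = ((Q / den r : ℕ):ℝ) * ((den r : ℝ) * α r) := by rw [ha']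
      _ = (((Q / den r : ℕ):ℝ) * (den r : ℝ)) * α r := by ring
      _ = Q * α r := by rw [hQd]
  set Prat : Fin R → Prop := fun s => ∃ A : ℕ, (A:ℝ) = Q * α s with hPrat
  set AQ : Fin R → ℕ := fun r => if h : Prat r then h.choose else 0 with hAQdef
  have hAQ : ∀ r, Prat r → ((AQ r : ℝ) = Q * α r ∧ Q < AQ r) := by
    intro r h
    have h1 : (AQ r : ℝ) = Q * α r := by rw [hAQdef]; simp only [dif_pos h]; exact h.choose_spec
    refine ⟨h1, ?_⟩
    have h2 : (Q:ℝ) < AQ r := by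
      rw [h1]
      nlinarith [hα r, (by exact_mod_cast hQpos : (0:ℝ) < Q)]
    exact_mod_cast h2
  set S : Finset ℕ := (Finset.univ.image AQ).filter (fun A => Q < A) with hSdef
  obtain ⟨P, hPpos, hP⟩ := ncLemma Q hQpos S (fun A hA => (Finset.mem_filter.mp hA).2)
  set L : ℕ := P * (R+1) with hLdef
  have hL : 0 < L := by positivity
  set F : Finset (Fin R × ℕ × ℕ) :=
    (Finset.univ ×ˢ Finset.range (L+1) ×ˢ Finset.range (L+1)).filter
      (fun x => (x.2.2:ℝ) < x.2.1 * α x.1) with hFdef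
  set vals : Finset ℝ := insert (1/((Q:ℝ)*(L+1))) (F.image (fun x => x.2.1 * α x.1 - x.2.2))
    with hvals
  have hvne : vals.Nonempty := ⟨_, Finset.mem_insert_self _ _⟩
  set δ : ℝ := vals.min' hvne / (L+1) with hδdef
  have hmin_pos : 0 < vals.min' hvne := by
    rw [Finset.lt_min'_iff]
    intro y hy
    rw [hvals] at hy
    rcases Finset.mem_insert.mp hy with rfl | hy
    · positivity
    · obtain ⟨x, hx, rfl⟩ := Finset.mem_image.mp hy
      have := (Finset.mem_filter.mp hx).2
      linarith
  have hδpos : 0 < δ := by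
    rw [hδdef]; positivity
  have hδ1 : (Q:ℝ) * L * δ < 1 := by
    have h1 : vals.min' hvne ≤ 1/((Q:ℝ)*(L+1)) := Finset.min'_le _ _ (Finset.mem_insert_self _ _)
    have hQR : (0:ℝ) < Q := by exact_mod_cast hQpos
    have hLR : (0:ℝ) < L := by exact_mod_cast hL
    have hL1 : (0:ℝ) < (L:ℝ)+1 := by positivity
    have key' : vals.min' hvne * ((Q:ℝ)*((L:ℝ)+1)) ≤ 1 := (le_div_iff₀ (by positivity)).mp h1
    have hLm : δ * ((L:ℝ)+1) = vals.min' hvne := by rw [hδdef]; field_simp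
    have e1 : (Q:ℝ)*δ*(((L:ℝ)+1))^2 ≤ 1 := by nlinarith [key', hLm]
    nlinarith [e1, mul_pos hQR hδpos, hLR]
  have hδ2 : ∀ (r : Fin R) (k d : ℕ), 0 < k → k ≤ L → 0 < d → d ≤ L →
      (d:ℝ) < k * α r → (d:ℝ) + L*δ < k * α r := by
    intro r k d hk hkL hd hdL hlt
    have hmem : (r, (k, d)) ∈ F := by
      rw [hFdef]
      refine Finset.mem_filter.mpr ⟨?_, hlt⟩
      refine Finset.mem_product.mpr ⟨Finset.mem_univ _, Finset.mem_product.mpr ⟨?_, ?_⟩⟩ <;>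
        simp [Finset.mem_range] <;> omega
    have h1 : vals.min' hvne ≤ (k:ℝ) * α r - d := by
      apply Finset.min'_le
      rw [hvals]
      exact Finset.mem_insert_of_mem (Finset.mem_image.mpr ⟨_, hmem, rfl⟩)
    have h2 : (L:ℝ)*δ < (L+1)*δ := by
      have : (L:ℝ) < L+1 := by linarith
      exact mul_lt_mul_of_pos_right this hδpos
    have h3 : ((L:ℝ)+1)*δ = vals.min' hvne := by
      rw [hδdef]
      field_simp
    linarith
  have hLR : (0:ℝ) < L := by exact_mod_cast hL
  have hQR1 : (1:ℝ) ≤ Q := by exact_mod_cast hQpos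
  have hLδ : (L:ℝ)*δ < 1 := by nlinarith [hδ1, hδpos]
  have hL2 : L = P * R + P := by rw [hLdef]; ring
  have hRL : R + 1 ≤ L := by rw [hLdef]; exact Nat.le_mul_of_pos_left _ hPpos
  have hQprop' : ∀ r : Fin R, (∃ k d : ℕ, 0 < k ∧ (k:ℝ) * α r = d) → Prat r :=
    fun r h => hQprop r h
  have hSmem : ∀ r : Fin R, Prat r → AQ r ∈ S := by
    intro r h
    rw [hSdef]
    exact Finset.mem_filter.mpr ⟨Finset.mem_image.mpr ⟨r, Finset.mem_univ r, rfl⟩, (hAQ r h).2⟩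
  clear_value δ
  clear hδdef hmin_pos hvne hvals hFdef hSdef hAQdef
  clear_value vals F S AQ Prat L Q den
  clear hPrat hden hQdef hLdef
  refine ⟨δ/(2*L), by positivity, fun u hupos hu1 hgap hrep => ?_⟩
  have hrep' : ∀ p : ℕ, ∃ (m : ℕ) (s : Fin R), 1 ≤ p → (0 < m ∧ u p = m * α s) := by
    intro p
    by_cases hp : 1 ≤ p
    · obtain ⟨m, s, hm, hu⟩ := hrep p hp
      exact ⟨m, s, fun _ => ⟨hm, hu⟩⟩
    · exact ⟨1, Classical.arbitrary _, fun h => absurd h hp⟩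
  choose mm rr hmr using hrep'
  have hmono : ∀ a : ℕ, 1 ≤ a → ∀ k : ℕ, u a + k ≤ u (a + k) := by
    intro a ha k
    induction k with
    | zero => simp
    | succ k ih =>
      have h1 := hgap (a + k) (by omega)
      have hc : ((k+1 : ℕ):ℝ) = (k:ℝ) + 1 := by push_cast; ring
      rw [show a + (k+1) = (a+k) + 1 from rfl, hc]
      linarith
  have hwin : ∀ i : ℕ, 1 ≤ i → ∃ j : ℕ, i ≤ j ∧ j < i + L ∧ u j + (1+δ) ≤ u (j+1) := by
    intro i hi
    by_contra hcon
    push_neg at hcon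
    have hub : ∀ t : ℕ, t ≤ L → u (i+t) ≤ u i + t + L*δ := by
      have haux : ∀ t : ℕ, t ≤ L → u (i+t) ≤ u i + t*(1+δ) := by
        intro t
        induction t with
        | zero => intro _; simp
        | succ t ih =>
          intro ht
          have h1 := hcon (i+t) (by omega) (by omega)
          have h2 := ih (by omega)
          rw [show i + (t+1) = (i+t) + 1 from rfl]
          push_cast
          push_cast at h2
          nlinarith [hδpos]
      intro t ht
      have h1 := haux t ht
      have h2 : (t:ℝ) ≤ (L:ℝ) := by exact_mod_cast ht
      have h3 : (0:ℝ) ≤ (t:ℝ) := by positivity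
      nlinarith [hδpos]
    have hlb : ∀ t : ℕ, u i + t ≤ u (i+t) := fun t => hmono i hi t
    have final : ∀ (t t' : ℕ), t < t' → t' ≤ L → rr (i+t') = rr (i+t) →
        ¬ Prat (rr (i+t)) → False := by
      intro t t' htt' ht'L hsame hirr
      set s : Fin R := rr (i+t) with hsdef
      have h1 : u (i+t) = mm (i+t) * α s := (hmr _ (by omega)).2
      have h2 : u (i+t') = mm (i+t') * α s := by
        have := (hmr (i+t') (by omega)).2
        rwa [hsame] at this
      have hd1 : u (i+t) + ((t' - t : ℕ):ℝ) ≤ u (i+t') := by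
        have := hmono (i+t) (by omega) (t' - t)
        rwa [show i + t + (t' - t) = i + t' by omega] at this
      have hd2 : u (i+t') ≤ u i + t' + L*δ := hub t' ht'L
      have hd3 : u i + t ≤ u (i+t) := hlb t
      have hαs := hα s
      have hmmlt : mm (i+t) < mm (i+t') := by
        have hdpos : (0:ℝ) < ((t' - t : ℕ):ℝ) := by
          have : 0 < t' - t := by omega
          exact_mod_cast this
        have : (mm (i+t) : ℝ) * α s < (mm (i+t') : ℝ) * α s := by
          rw [← h1, ← h2]; linarith
        have := lt_of_mul_lt_mul_right this (by linarith : (0:ℝ) ≤ α s)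
        exact_mod_cast this
      set k : ℕ := mm (i+t') - mm (i+t) with hkdef
      set d : ℕ := t' - t with hddef
      have hkc : (k:ℝ) = (mm (i+t') : ℝ) - mm (i+t) := by
        rw [hkdef]; push_cast [Nat.cast_sub hmmlt.le]; ring
      have hdc : (d:ℝ) = (t':ℝ) - t := by
        rw [hddef]; push_cast [Nat.cast_sub htt'.le]; ring
      have hdk1 : (d:ℝ) ≤ (k:ℝ) * α s := by
        rw [hkc, hdc]
        have hdcast : ((t' - t : ℕ):ℝ) = (t':ℝ) - t := by push_cast [Nat.cast_sub htt'.le]; ring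
        rw [hdcast] at hd1
        nlinarith [h1, h2, hd1]
      have hdk2 : (k:ℝ) * α s ≤ (d:ℝ) + L*δ := by
        rw [hkc, hdc]
        nlinarith [h1, h2, hd2, hd3]
      have hk1 : 0 < k := by omega
      have hd0 : 0 < d := by omega
      have hdL : d ≤ L := by omega
      have hkL : k ≤ L := by
        have hdLR : (d:ℝ) ≤ L := by exact_mod_cast hdL
        have : (k:ℝ) < (L:ℝ) + 1 := by nlinarith [hdk2, hLδ, hk1]
        have : k < L + 1 := by exact_mod_cast this
        omega
      by_cases hcase : (k:ℝ) * α s = d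
      · exact hirr (hQprop' s ⟨k, d, hk1, hcase⟩)
      · have hlt : (d:ℝ) < (k:ℝ) * α s := lt_of_le_of_ne hdk1 (Ne.symm hcase)
        have := hδ2 s k d hk1 hkL hd0 hdL hlt
        linarith
    have key : ∃ T : Fin (R+1) → ℕ, StrictMono T ∧ (∀ j, T j ≤ L) ∧
        (∀ j, ¬ Prat (rr (i + T j))) := by
      by_cases hrat : ∃ t : ℕ, t ≤ L ∧ Prat (rr (i + t))
      · obtain ⟨t0, ht0L, hprat0⟩ := hrat
        set w : ℤ := (mm (i+t0) : ℤ) * (AQ (rr (i+t0)) : ℤ) - (Q:ℤ) * t0 with hwdef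
        have e0 : ∀ s : ℕ, s ≤ L → Prat (rr (i+s)) →
            (((mm (i+s) : ℤ) * (AQ (rr (i+s)) : ℤ) : ℤ) : ℝ) = Q * u (i+s) := by
          intro s hs hp'
          obtain ⟨hA, _⟩ := hAQ _ hp'
          have hval := (hmr (i+s) (by omega)).2
          push_cast
          rw [hA, hval]
          ring
        have hw : ∀ t : ℕ, t ≤ L → Prat (rr (i+t)) →
            (w + (Q:ℤ) * t) = (mm (i+t) : ℤ) * (AQ (rr (i+t)) : ℤ) := by
          intro t ht hprat
          apply int_eq_of_abs_lt_one
          have e1 := e0 t ht hprat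
          have e2 := e0 t0 ht0L hprat0
          have b1 := hub t ht; have b2 := hlb t
          have b3 := hub t0 ht0L; have b4 := hlb t0
          have hQR : (0:ℝ) < Q := by exact_mod_cast hQpos
          rw [hwdef]
          push_cast
          push_cast at e1 e2
          rw [abs_lt]
          constructor <;> nlinarith [hδ1, hQR]
        obtain ⟨τ, hτP, hτ⟩ := hP w
        refine ⟨fun j => τ + P * (j:ℕ), ?_, ?_, ?_⟩
        · intro a b hab
          have h : (a:ℕ) < (b:ℕ) := hab
          exact Nat.add_lt_add_left (mul_lt_mul_of_pos_left h hPpos) τ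
        · intro j
          show τ + P * (j:ℕ) ≤ L
          have hjR : (j:ℕ) ≤ R := Nat.lt_succ_iff.mp j.isLt
          have := Nat.mul_le_mul_left P hjR
          omega
        · intro j
          dsimp only
          intro hprat
          have hjL : τ + P * (j:ℕ) ≤ L := by
            have hjR : (j:ℕ) ≤ R := Nat.lt_succ_iff.mp j.isLt
            have := Nat.mul_le_mul_left P hjR
            omega
          have hAS : AQ (rr (i + (τ + P * (j:ℕ)))) ∈ S := hSmem _ hprat
          have hdvd : ((P:ℕ):ℤ) ∣ ((τ + P * (j:ℕ) : ℕ):ℤ) - (τ:ℤ) := ⟨(j:ℕ), by push_cast; ring⟩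
          apply hτ ((τ + P * (j:ℕ) : ℕ):ℤ) hdvd _ hAS
          exact ⟨(mm (i + (τ + P * (j:ℕ))) : ℤ), by rw [hw _ hjL hprat]; ring⟩
      · push_neg at hrat
        refine ⟨fun j => (j:ℕ), fun a b hab => hab, fun j => ?_, fun j => ?_⟩
        · show (j:ℕ) ≤ L
          have hjR : (j:ℕ) ≤ R := Nat.lt_succ_iff.mp j.isLt
          omega
        · show ¬ Prat (rr (i + (j:ℕ)))
          have hjR : (j:ℕ) ≤ R := Nat.lt_succ_iff.mp j.isLt
          exact hrat _ (by omega)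
    obtain ⟨T, hTmono, hTle, hTirr⟩ := key
    obtain ⟨j, j', hne, heq⟩ := Fintype.exists_ne_map_eq_of_card_lt
      (fun j : Fin (R+1) => rr (i + T j)) (by simp)
    have hTne : T j ≠ T j' := fun h => hne (hTmono.injective h)
    rcases hTne.lt_or_gt with h | h
    · exact final (T j) (T j') h (hTle j') heq.symm (hTirr j)
    · exact final (T j') (T j) h (hTle j) heq (hTirr j')
  -- telescoping
  have hstep : ∀ n : ℕ, u 1 + ((n*L : ℕ):ℝ) + n*δ ≤ u (1 + n*L) := by
    intro n
    induction n with
    | zero => simp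
    | succ n ih =>
      obtain ⟨j, hj1, hj2, hj3⟩ := hwin (1+n*L) (by omega)
      obtain ⟨s, hs⟩ : ∃ s, j = 1+n*L+s := ⟨j - (1+n*L), by omega⟩
      have hsL : s < L := by omega
      obtain ⟨c, hc⟩ : ∃ c, L = s+1+c := ⟨L - s - 1, by omega⟩
      have e1 : u (1+n*L) + (s:ℝ) ≤ u j := by
        have := hmono (1+n*L) (by omega) s
        rwa [← hs] at this
      have e3 : u (j+1) + (c:ℝ) ≤ u (j+1+c) := hmono (j+1) (by omega) c
      have eidx : j+1+c = 1+(n+1)*L := by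
        subst hs
        have hnl : (n+1)*L = n*L + L := by ring
        omega
      rw [eidx] at e3
      have hcast1 : (((n+1)*L : ℕ):ℝ) = ((n*L:ℕ):ℝ) + (s:ℝ) + 1 + (c:ℝ) := by
        push_cast
        have : (L:ℝ) = (s:ℝ) + 1 + (c:ℝ) := by exact_mod_cast hc
        nlinarith [this]
      push_cast
      push_cast at ih hcast1 ⊢
      nlinarith [e1, hj3, e3, ih, hδpos, hcast1]
  rw [Filter.eventually_atTop]
  refine ⟨2*L+1, fun p hp => ?_⟩
  set n : ℕ := (p-1)/L with hndef
  set s : ℕ := (p-1)%L with hsdef2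
  have hps : p = 1 + n*L + s := by
    have h1 := Nat.div_add_mod (p-1) L
    have h2 : n * L = L * ((p-1)/L) := by rw [hndef]; ring
    omega
  have hsL : s < L := Nat.mod_lt _ hL
  have e1 := hstep n
  have e2 : u (1+n*L) + (s:ℝ) ≤ u p := by
    have := hmono (1+n*L) (by omega) s
    rwa [← hps] at this
  have hn2 : p < 2*L*n := by
    have h1 := Nat.div_add_mod (p-1) L
    nlinarith [hsL, hp, hL]
  have hupper : (p:ℝ) + n*δ ≤ u p := by
    have hcast : ((n*L:ℕ):ℝ) + (s:ℝ) + 1 = (p:ℝ) := by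
      rw [hps]; push_cast; ring
    linarith [e1, e2, hu1, hcast.ge, hcast.le]
  have hc1 : (p:ℝ) < 2*(L:ℝ)*(n:ℝ) := by exact_mod_cast hn2
  have hXpos : (0:ℝ) < δ/(2*L) := by positivity
  have hXd : δ/(2*L)*(2*(L:ℝ)) = δ := by field_simp
  nlinarith [hupper, hc1, hXpos, hXd, hδpos]
end

section
/- Let α₁, …, α_R be real numbers, each strictly larger than 1, such that α₁⁻¹, …, α_S⁻¹ (for some S ≤ R) span over ℚ the same ℚ-vector space as α₁⁻¹, …, α_R⁻¹, and suppose that for each r ∈ {S+1,…,R} there are a nonzero integer c_r and integers c_{r,1}, …, c_{r,S} with c_r·α_r⁻¹ = Σ_{i=1}^{S} c_{r,i}·α_i⁻¹. Set M = Π_{r=S+1}^{R} |c_r| (with M = 1 if S = R). Then there exists a constant C > 0, depending only on α₁, …, α_R and the chosen integer relations, such that for every ε ∈ (0,1), every r ∈ {2,…,R}, and every natural number l satisfying: for each i ∈ {2,…,S} there is an integer q_i with |l·α₁/α_i − q_i| < ε/2, there exists an integer q' with |M·l·α₁ − q'·α_r| < C·ε. -/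
/-- Let `α r > 1` be reals (`r : Fin R`, `0`-based, `α₁ = α 0`), such that the
reciprocals of the first `S` of them span over `ℚ` the same `ℚ`-vector space as all
the reciprocals, with integer relations `c r * (α r)⁻¹ = ∑ i, cc r i * (α i)⁻¹`
(`c r ≠ 0`) for `r` with index `≥ S`. Let `M = ∏_{S ≤ r} |c r|`. Then there is
`C > 0` (depending only on the data) such that for every `ε ∈ (0,1)`, every
`r ∈ {2, …, R}`, and every `l ∈ ℕ` with `l * α₁ / α i` within `ε/2` of an integer
for each `i ∈ {2, …, S}`, there is an integer `q'` with
`|M * l * α₁ - q' * α r| < C * ε`. -/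
theorem stmt3 (R S : ℕ) (hS : 0 < S) (hSR : S ≤ R)
    (α : Fin R → ℝ) (hα : ∀ r, 1 < α r)
    (hspan : Submodule.span ℚ (Set.range fun i : Fin S => (α (Fin.castLE hSR i))⁻¹)
        = Submodule.span ℚ (Set.range fun r : Fin R => (α r)⁻¹))
    (c : Fin R → ℤ) (cc : Fin R → Fin S → ℤ)
    (hc : ∀ r : Fin R, S ≤ (r : ℕ) → c r ≠ 0)
    (hrel : ∀ r : Fin R, S ≤ (r : ℕ) →
      (c r : ℝ) * (α r)⁻¹ = ∑ i, (cc r i : ℝ) * (α (Fin.castLE hSR i))⁻¹) :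
    ∃ C : ℝ, 0 < C ∧ ∀ ε : ℝ, 0 < ε → ε < 1 →
      ∀ r : Fin R, r ≠ ⟨0, hS.trans_le hSR⟩ →
      ∀ l : ℕ,
        (∀ i : Fin S, i ≠ ⟨0, hS⟩ →
          ∃ q : ℤ, |(l : ℝ) * α ⟨0, hS.trans_le hSR⟩ / α (Fin.castLE hSR i) - q| < ε / 2) →
        ∃ q' : ℤ,
          |((∏ r' ∈ Finset.univ.filter (fun r' : Fin R => S ≤ (r' : ℕ)), |c r'| : ℤ) : ℝ)
              * (l : ℝ) * α ⟨0, hS.trans_le hSR⟩ - (q' : ℝ) * α r| < C * ε := by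
  classical
  set α0 : Fin R := ⟨0, hS.trans_le hSR⟩ with hα0
  set M : ℤ := ∏ r' ∈ Finset.univ.filter (fun r' : Fin R => S ≤ (r' : ℕ)), |c r'| with hM
  have hMpos : 0 < M := Finset.prod_pos (by
    intro r' hr'
    simp only [Finset.mem_filter] at hr'
    exact abs_pos.mpr (hc r' hr'.2))
  have hαpos : ∀ r, (0:ℝ) < α r := fun r => lt_trans one_pos (hα r)
  set A : ℝ := ∑ r, α r with hA
  set B : ℝ := ∑ r : Fin R, ∑ i : Fin S, |(cc r i : ℝ)| with hB
  have hAnn : 0 ≤ A := Finset.sum_nonneg fun r _ => (hαpos r).le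
  have hBnn : 0 ≤ B := Finset.sum_nonneg fun r _ => Finset.sum_nonneg fun i _ => abs_nonneg _
  have hM1 : (1:ℤ) ≤ M := hMpos
  have hAle : ∀ r, α r ≤ A := fun r =>
    Finset.single_le_sum (f := α) (fun r _ => (hαpos r).le) (Finset.mem_univ r)
  refine ⟨1 + (M:ℝ) * A * (1 + B), by positivity, ?_⟩
  intro ε hε hε1 r hr l hq
  choose q hq' using hq
  rcases lt_or_ge (r : ℕ) S with hrS | hrS
  · -- r has index < S : use hypothesis directly
    set i : Fin S := ⟨r, hrS⟩ with hi
    have hir : Fin.castLE hSR i = r := rfl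
    have hi0 : i ≠ ⟨0, hS⟩ := by
      intro h
      apply hr
      have : (r : ℕ) = 0 := congrArg Fin.val h
      exact Fin.ext this
    refine ⟨M * q i hi0, ?_⟩
    have hne : α r ≠ 0 := (hαpos r).ne'
    have hid : (M:ℝ) * l * α α0 - ((M * q i hi0 : ℤ) : ℝ) * α r
        = (M:ℝ) * α r * ((l : ℝ) * α α0 / α r - (q i hi0 : ℝ)) := by
      push_cast
      field_simp
    rw [hid, abs_mul]
    have hMR : (0:ℝ) < (M:ℝ) := by exact_mod_cast hMpos
    have h1 : |(M:ℝ) * α r| = (M:ℝ) * α r := abs_of_pos (mul_pos hMR (hαpos r))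
    rw [h1]
    have h2 := hq' i hi0
    rw [hir] at h2
    have h3 : (M:ℝ) * α r * |(l : ℝ) * α α0 / α r - (q i hi0 : ℝ)|
        < (M:ℝ) * α r * (ε / 2) :=
      mul_lt_mul_of_pos_left h2 (mul_pos hMR (hαpos r))
    refine h3.trans_le ?_
    have hMr : (M:ℝ) * α r ≤ (M:ℝ) * A := mul_le_mul_of_nonneg_left (hAle r) hMR.le
    nlinarith [mul_le_mul_of_nonneg_right hMr hε.le,
      mul_nonneg (mul_nonneg (mul_nonneg hMR.le hAnn) hBnn) hε.le,
      mul_nonneg (mul_nonneg hMR.le (hαpos r).le) hε.le, hε]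
  · -- r has index ≥ S : use relation
    have hcr := hc r hrS
    have hrelr := hrel r hrS
    set s : ℤ := if 0 < c r then 1 else -1 with hs
    have habs : |c r| = s * c r := by
      rcases lt_trichotomy (c r) 0 with h | h | h
      · simp [hs, not_lt.mpr h.le, h.not_gt, abs_of_neg h]
      · exact absurd h hcr
      · simp [hs, h, abs_of_pos h]
    set M' : ℤ := ∏ r' ∈ (Finset.univ.filter (fun r' : Fin R => S ≤ (r' : ℕ))).erase r, |c r'|
      with hM'
    have hM'pos : 0 < M' := Finset.prod_pos (by
      intro r' hr'
      simp only [Finset.mem_erase, Finset.mem_filter] at hr'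
      exact abs_pos.mpr (hc r' hr'.2.2))
    have hMM' : M = |c r| * M' :=
      (Finset.mul_prod_erase _ _ (by simp [hrS])).symm
    have hM'leM : M' ≤ M := by
      rw [hMM']
      nlinarith [abs_pos.mpr hcr, hM'pos]
    set q2 : Fin S → ℤ := fun i => if h : i = ⟨0, hS⟩ then (l:ℤ) else q i h with hq2
    set Q : ℤ := ∑ i : Fin S, cc r i * q2 i with hQ
    refine ⟨M' * s * Q, ?_⟩
    have hne : α r ≠ 0 := (hαpos r).ne'
    -- key identity
    have key : (c r : ℝ) * ((l:ℝ) * α α0) =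
        α r * ∑ i, (cc r i : ℝ) * ((l:ℝ) * α α0 / α (Fin.castLE hSR i)) := by
      have step1 : α r * ∑ i, (cc r i : ℝ) * ((l:ℝ) * α α0 / α (Fin.castLE hSR i))
          = ((l:ℝ) * α α0 * α r) * ∑ i, (cc r i : ℝ) * (α (Fin.castLE hSR i))⁻¹ := by
        rw [Finset.mul_sum, Finset.mul_sum]
        refine Finset.sum_congr rfl fun i _ => ?_
        rw [div_eq_mul_inv]; ring
      rw [step1, ← hrelr]
      field_simp
    have hsabs : |(s:ℝ)| = 1 := by
      rcases lt_trichotomy (c r) 0 with h | h | h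
      · simp [hs, not_lt.mpr h.le, h.not_gt]
      · exact absurd h hcr
      · simp [hs, h]
    have hMreal : (M:ℝ) = (s:ℝ) * (c r : ℝ) * (M':ℝ) := by
      rw [hMM', habs]; push_cast; ring
    have hdiff : (M:ℝ) * l * α α0 - ((M' * s * Q : ℤ) : ℝ) * α r
        = (M':ℝ) * (s:ℝ) * α r *
          (∑ i, (cc r i : ℝ) * ((l:ℝ) * α α0 / α (Fin.castLE hSR i) - (q2 i : ℝ))) := by
      have : (M:ℝ) * l * α α0 = (M':ℝ) * (s:ℝ) * ((c r : ℝ) * ((l:ℝ) * α α0)) := by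
        rw [hMreal]; ring
      rw [this, key]
      push_cast [hQ]
      simp only [Finset.mul_sum, Finset.sum_mul, ← Finset.sum_sub_distrib]
      exact Finset.sum_congr rfl fun i _ => by ring
    rw [hdiff, abs_mul, abs_mul, abs_mul, hsabs, mul_one]
    have hM'abs : |(M':ℝ)| = (M':ℝ) := abs_of_pos (by exact_mod_cast hM'pos)
    have hαabs : |α r| = α r := abs_of_pos (hαpos r)
    rw [hM'abs, hαabs]
    -- bound the sum
    have hterm : ∀ i : Fin S, |(cc r i : ℝ) * ((l:ℝ) * α α0 / α (Fin.castLE hSR i) - (q2 i : ℝ))|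
        ≤ |(cc r i : ℝ)| * (ε / 2) := by
      intro i
      rw [abs_mul]
      refine mul_le_mul_of_nonneg_left ?_ (abs_nonneg _)
      by_cases h : i = ⟨0, hS⟩
      · subst h
        have hcast : Fin.castLE hSR (⟨0, hS⟩ : Fin S) = α0 := rfl
        have : (l:ℝ) * α α0 / α (Fin.castLE hSR ⟨0, hS⟩) - (q2 ⟨0, hS⟩ : ℝ) = 0 := by
          rw [hcast]
          simp [hq2, mul_div_assoc, div_self (hαpos α0).ne']
        rw [this]
        simp
        positivity
      · have := (hq' i h).le
        simpa [hq2, h] using this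
    have hsum : |∑ i, (cc r i : ℝ) * ((l:ℝ) * α α0 / α (Fin.castLE hSR i) - (q2 i : ℝ))|
        ≤ (∑ i, |(cc r i : ℝ)|) * (ε / 2) := by
      refine (Finset.abs_sum_le_sum_abs _ _).trans ?_
      rw [Finset.sum_mul]
      exact Finset.sum_le_sum fun i _ => hterm i
    have hccB : (∑ i, |(cc r i : ℝ)|) ≤ B := by
      exact Finset.single_le_sum (f := fun r' => ∑ i, |(cc r' i : ℝ)|)
        (fun r' _ => Finset.sum_nonneg fun i _ => abs_nonneg _) (Finset.mem_univ r)
    have hMR : (0:ℝ) < (M:ℝ) := by exact_mod_cast hMpos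
    have hM'R : (0:ℝ) < (M':ℝ) := by exact_mod_cast hM'pos
    have hfinal : (M':ℝ) * α r *
        |∑ i, (cc r i : ℝ) * ((l:ℝ) * α α0 / α (Fin.castLE hSR i) - (q2 i : ℝ))|
        ≤ (M:ℝ) * A * (B * (ε / 2)) := by
      have h1 : (M':ℝ) * α r ≤ (M:ℝ) * A := by
        have hle : (M':ℝ) ≤ (M:ℝ) := by exact_mod_cast hM'leM
        calc (M':ℝ) * α r ≤ (M:ℝ) * α r := mul_le_mul_of_nonneg_right hle (hαpos r).le
          _ ≤ (M:ℝ) * A := mul_le_mul_of_nonneg_left (hAle r) hMR.le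
      have h2 : |∑ i, (cc r i : ℝ) * ((l:ℝ) * α α0 / α (Fin.castLE hSR i) - (q2 i : ℝ))|
          ≤ B * (ε / 2) :=
        hsum.trans (mul_le_mul_of_nonneg_right hccB (by positivity))
      exact mul_le_mul h1 h2 (abs_nonneg _) (mul_nonneg hMR.le hAnn)
    refine hfinal.trans_lt ?_
    have hMA : (0:ℝ) ≤ (M:ℝ) * A := mul_nonneg hMR.le hAnn
    nlinarith [hε, mul_nonneg (mul_nonneg hMA hBnn) hε.le, mul_nonneg hMA hε.le]
end

section
/- Let ε₁ > 0 and let α₁, …, α_R be real numbers with α_r > 1 + 3ε₁ for every r ∈ {1,…,R}. Let x be a real number such that for every r ∈ {1,…,R} there exists an integer q_r with |x − q_r·α_r| < ε₁. Then the closed interval [x + ε₁, x + 2ε₁ + 1] contains no element of 𝒜 = {m·α_r : m a positive integer, r ∈ {1,…,R}}. -/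
/-- If `α r > 1 + 3 ε₁` for all `r` and `x` is within `ε₁` of an integer multiple of
each `α r`, then the interval `[x + ε₁, x + 2 ε₁ + 1]` contains no element of
`𝒜 = {m * α r : m positive integer}`. -/
theorem stmt4 (R : ℕ) (ε₁ : ℝ) (hε₁ : 0 < ε₁) (α : Fin R → ℝ)
    (hα : ∀ r, 1 + 3 * ε₁ < α r) (x : ℝ)
    (hx : ∀ r : Fin R, ∃ q : ℤ, |x - q * α r| < ε₁) :
    ∀ y ∈ Set.Icc (x + ε₁) (x + 2 * ε₁ + 1),
      ¬ ∃ (m : ℕ) (r : Fin R), 0 < m ∧ y = m * α r := by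
  rintro y ⟨hy1, hy2⟩ ⟨m, r, hm, rfl⟩
  obtain ⟨q, hq⟩ := hx r
  have hαr := hα r
  have hα0 : (0:ℝ) < α r := by linarith
  rw [abs_lt] at hq
  have h1 : (q : ℝ) * α r < (m : ℝ) * α r := by linarith
  have h2 : (m : ℝ) * α r < ((q : ℝ) + 1) * α r := by nlinarith
  have hq1 : (q : ℝ) < (m : ℝ) := lt_of_mul_lt_mul_right h1 hα0.le
  have hq2 : (m : ℝ) < (q : ℝ) + 1 := lt_of_mul_lt_mul_right h2 hα0.le
  have hz1 : q < (m : ℤ) := by exact_mod_cast hq1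
  have hz2 : (m : ℤ) < q + 1 := by exact_mod_cast hq2
  omega
end

section
/- Let α₁, …, α_R be real numbers, each strictly larger than 1, and let 𝒜 = {m·α_r : m a positive integer, r ∈ {1,…,R}}. Then there exist ε₁ ∈ (0,1) and d > 0 such that for all sufficiently large P > 0 there exist at least d·P pairwise disjoint closed intervals, each of length 1 + ε₁, contained in [0, P] and each disjoint from 𝒜. -/
open Metric Set Filter

namespace Stmt5Aux

noncomputable section

/-- The homomorphism `t ↦ (t / α r mod 1)_r` into the torus. -/
def phihom {R : ℕ} (α : Fin R → ℝ) : ℝ →+ (Fin R → AddCircle (1:ℝ)) where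
  toFun t := fun r => ((t / α r : ℝ) : AddCircle (1:ℝ))
  map_zero' := by funext r; simp
  map_add' s t := by funext r; simp [add_div]

lemma phihom_apply {R : ℕ} (α : Fin R → ℝ) (t : ℝ) (r : Fin R) :
    phihom α t r = ((t / α r : ℝ) : AddCircle (1:ℝ)) := rfl

lemma neg_mem_closure {R : ℕ} (α : Fin R → ℝ) {a : ℝ} (ha : 0 ≤ a) :
    -(phihom α a) ∈ closure (phihom α '' Ici (0:ℝ)) := by
  rw [Metric.mem_closure_iff]
  intro η hη
  obtain ⟨x, hx⟩ := exists_clusterPt_of_compactSpace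
    (map (fun n : ℕ => phihom α (n * a)) atTop)
  have hfreq : ∃ᶠ n : ℕ in atTop, phihom α (n * a) ∈ ball x (η/2) :=
    (mapClusterPt_iff_frequently.mp hx) _ (ball_mem_nhds x (by positivity))
  obtain ⟨k, -, hk⟩ := frequently_atTop.mp hfreq 0
  obtain ⟨l, hl, hl'⟩ := frequently_atTop.mp hfreq (k+1)
  refine ⟨phihom α ((l - k - 1 : ℕ) * a),
    ⟨(l - k - 1 : ℕ) * a, mul_nonneg (Nat.cast_nonneg _) ha, rfl⟩, ?_⟩
  have hcast : ((l - k - 1 : ℕ) : ℝ) + 1 = (l : ℝ) - (k : ℝ) := by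
    have h1 : k + 1 ≤ l := hl
    rw [Nat.cast_sub (by omega), Nat.cast_sub (by omega)]
    push_cast; ring
  have key : phihom α ((l - k - 1 : ℕ) * a) + phihom α a
      = phihom α ((l : ℕ) * a) - phihom α ((k : ℕ) * a) := by
    rw [← map_add, ← map_sub]
    congr 1
    linear_combination a * hcast
  have hdist : dist (-(phihom α a)) (phihom α ((l - k - 1 : ℕ) * a))
      = dist (phihom α ((l:ℕ) * a)) (phihom α ((k:ℕ) * a)) := by
    rw [dist_eq_norm, dist_eq_norm, ← key]
    rw [show -(phihom α a) - (phihom α ((l - k - 1 : ℕ) * a))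
        = -((phihom α ((l - k - 1 : ℕ) * a)) + phihom α a) by abel]
    rw [norm_neg]
  rw [hdist]
  calc dist (phihom α ((l:ℕ) * a)) (phihom α ((k:ℕ) * a))
      ≤ dist (phihom α ((l:ℕ) * a)) x + dist x (phihom α ((k:ℕ) * a)) := dist_triangle _ _ _
    _ < η/2 + η/2 := by
        have h1 := mem_ball.mp hl'
        have h2 := mem_ball.mp hk
        rw [dist_comm x (phihom α ((k:ℕ) * a))]
        exact add_lt_add h1 h2
    _ = η := by ring

lemma syndetic {R : ℕ} (α : Fin R → ℝ) {δ : ℝ} (hδ : 0 < δ) :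
    ∃ S : ℝ, 0 < S ∧ ∀ a : ℝ, 0 ≤ a → ∃ t : ℝ, a ≤ t ∧ t ≤ a + S ∧
      ∀ r, ‖phihom α t r‖ < δ := by
  set K := closure (phihom α '' Ici (0:ℝ)) with hK
  have hKc : IsCompact K := isClosed_closure.isCompact
  have hcover : K ⊆ ⋃ i : Ici (0:ℝ), ball (phihom α i) δ := by
    intro x hx
    obtain ⟨y, ⟨t, ht, rfl⟩, hxy⟩ := Metric.mem_closure_iff.mp hx δ hδ
    exact mem_iUnion.mpr ⟨⟨t, ht⟩, by simpa [mem_ball, dist_comm] using hxy⟩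
  obtain ⟨s, hs⟩ := hKc.elim_finite_subcover _ (fun i : Ici (0:ℝ) => isOpen_ball) hcover
  have hne : s.Nonempty := by
    by_contra h
    have h0 : phihom α 0 ∈ K := subset_closure ⟨0, by simp, rfl⟩
    rw [Finset.not_nonempty_iff_eq_empty.mp h] at hs
    simpa using hs h0
  refine ⟨1 + s.sup' hne (fun i => (i:ℝ)), ?_, ?_⟩
  · obtain ⟨i, hi⟩ := hne
    have h1 : (0:ℝ) ≤ i := i.2
    have h2 := Finset.le_sup' (fun i : Ici (0:ℝ) => (i:ℝ)) hi
    linarith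
  intro a ha
  have hmem : -(phihom α a) ∈ K := neg_mem_closure α ha
  have := hs hmem
  rw [mem_iUnion₂] at this
  obtain ⟨i, his, hib⟩ := this
  have hi0 : (0:ℝ) ≤ i := i.2
  have hisup := Finset.le_sup' (fun i : Ici (0:ℝ) => (i:ℝ)) his
  refine ⟨a + i, by linarith, by linarith, ?_⟩
  intro r
  have hnorm : ‖phihom α (a + i)‖ = dist (phihom α i) (-(phihom α a)) := by
    rw [dist_eq_norm, sub_neg_eq_add, map_add, add_comm]
  have hlt : dist (-(phihom α a)) (phihom α i) < δ := mem_ball.mp hib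
  calc ‖phihom α (a + i) r‖ ≤ ‖phihom α (a + i)‖ := norm_le_pi_norm _ r
    _ < δ := by rw [hnorm, dist_comm]; exact hlt

lemma coord_int {x δ : ℝ} (h : ‖((x:ℝ) : AddCircle (1:ℝ))‖ < δ) : ∃ n : ℤ, |x - n| < δ := by
  refine ⟨round x, ?_⟩
  rw [AddCircle.norm_eq] at h
  simpa using h

lemma assembly {R : ℕ} (α : Fin R → ℝ) (ε₁ S : ℝ) (hε0 : 0 < ε₁) (hε1 : ε₁ < 1) (hS0 : 0 < S)
    (hsynd : ∀ a : ℝ, 0 ≤ a → ∃ x : ℝ, a ≤ x ∧ x + 1 + ε₁ ≤ a + S ∧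
      ∀ y ∈ Set.Icc x (x + 1 + ε₁), ∀ (n : ℤ) (r : Fin R), y ≠ n * α r) :
    ∃ d : ℝ, 0 < d ∧ ∃ P₀ : ℝ, ∀ P : ℝ, P₀ ≤ P →
      ∃ (N : ℕ) (a : Fin N → ℝ),
        d * P ≤ N ∧
        (∀ j, Set.Icc (a j) (a j + 1 + ε₁) ⊆ Set.Icc 0 P) ∧
        (∀ j k, j ≠ k →
          Disjoint (Set.Icc (a j) (a j + 1 + ε₁)) (Set.Icc (a k) (a k + 1 + ε₁))) ∧
        (∀ j, ∀ y ∈ Set.Icc (a j) (a j + 1 + ε₁),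
          ¬ ∃ (m : ℕ) (r : Fin R), 0 < m ∧ y = m * α r) := by
  set S' := S + 1 with hS'
  have hS'0 : (0:ℝ) < S' := by simp only [hS']; linarith
  refine ⟨1/(2*S'), by positivity, 2*S', ?_⟩
  intro P hP
  have hP0 : 0 < P := by nlinarith
  choose x hx1 hx2 hx3 using hsynd
  set N := ⌊P / S'⌋₊ with hN
  have hNS : (N : ℝ) * S' ≤ P := by
    have := Nat.floor_le (show (0:ℝ) ≤ P / S' by positivity)
    rw [← hN] at this
    calc (N : ℝ) * S' ≤ (P / S') * S' := by
          exact mul_le_mul_of_nonneg_right this hS'0.le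
      _ = P := by field_simp
  have hnn : ∀ j : Fin N, (0:ℝ) ≤ (j:ℕ) * S' := fun j => by positivity
  refine ⟨N, fun j => x ((j:ℕ) * S') (hnn j), ?_, ?_, ?_, ?_⟩
  · -- count
    have hfl : P / S' - 1 < (N : ℝ) := by
      rw [hN]; exact Nat.sub_one_lt_floor _
    have h2 : 2 ≤ P / S' := by
      rw [le_div_iff₀ hS'0]; linarith
    have hfl' : P - S' < (N:ℝ) * S' := by
      have h3 := mul_lt_mul_of_pos_right hfl hS'0
      rw [sub_mul, div_mul_cancel₀ _ hS'0.ne', one_mul] at h3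
      linarith
    rw [one_div, inv_mul_eq_div, div_le_iff₀ (by positivity)]
    nlinarith
  · -- containment
    intro j y hy
    obtain ⟨hy1, hy2⟩ := hy
    have h1 := hx1 ((j:ℕ) * S') (hnn j)
    have h2 := hx2 ((j:ℕ) * S') (hnn j)
    have hjN : ((j:ℕ) : ℝ) ≤ (N : ℝ) - 1 := by
      have := j.2
      have : ((j:ℕ) : ℝ) + 1 ≤ (N : ℝ) := by exact_mod_cast Nat.succ_le_of_lt j.2
      linarith
    constructor
    · have := hnn j; linarith
    · have hub : ((j:ℕ) : ℝ) * S' + S ≤ P := by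
        have : ((j:ℕ) : ℝ) * S' ≤ ((N:ℝ) - 1) * S' :=
          mul_le_mul_of_nonneg_right hjN hS'0.le
        nlinarith
      linarith
  · -- disjoint
    have key : ∀ j k : Fin N, (j:ℕ) < (k:ℕ) →
        Disjoint (Set.Icc (x ((j:ℕ) * S') (hnn j)) (x ((j:ℕ) * S') (hnn j) + 1 + ε₁))
          (Set.Icc (x ((k:ℕ) * S') (hnn k)) (x ((k:ℕ) * S') (hnn k) + 1 + ε₁)) := by
      intro j k hjk
      rw [Set.disjoint_left]
      intro y hyj hyk
      have h2 := hx2 ((j:ℕ) * S') (hnn j)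
      have h1 := hx1 ((k:ℕ) * S') (hnn k)
      have hjk' : ((j:ℕ) : ℝ) + 1 ≤ ((k:ℕ) : ℝ) := by exact_mod_cast hjk
      have h3 : (((j:ℕ) : ℝ) + 1) * S' ≤ ((k:ℕ) : ℝ) * S' :=
        mul_le_mul_of_nonneg_right hjk' hS'0.le
      have hend : x ((j:ℕ) * S') (hnn j) + 1 + ε₁ < x ((k:ℕ) * S') (hnn k) := by
        nlinarith [h1, h2, h3, hS'0, hS']
      obtain ⟨_, hyj2⟩ := hyj
      obtain ⟨hyk1, _⟩ := hyk
      linarith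
    intro j k hjk
    rcases lt_or_gt_of_ne (fun h : (j:ℕ) = (k:ℕ) => hjk (Fin.ext h)) with h | h
    · exact key j k h
    · exact (key k j h).symm
  · -- avoidance
    rintro j y hy ⟨m, r, hm, hy'⟩
    refine hx3 ((j:ℕ) * S') (hnn j) y hy (m : ℤ) r ?_
    rw [hy']; push_cast; ring

end

end Stmt5Aux

/-- For reals `α r > 1`, there exist `ε₁ ∈ (0,1)` and `d > 0` such that for all
sufficiently large `P` there are at least `d * P` pairwise disjoint closed intervals
of length `1 + ε₁` contained in `[0, P]`, each disjoint from
`𝒜 = {m * α r : m positive integer}`. -/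
theorem stmt5 (R : ℕ) (α : Fin R → ℝ) (hα : ∀ r, 1 < α r) :
    ∃ ε₁ : ℝ, 0 < ε₁ ∧ ε₁ < 1 ∧ ∃ d : ℝ, 0 < d ∧ ∃ P₀ : ℝ, ∀ P : ℝ, P₀ ≤ P →
      ∃ (N : ℕ) (a : Fin N → ℝ),
        d * P ≤ N ∧
        (∀ j, Set.Icc (a j) (a j + 1 + ε₁) ⊆ Set.Icc 0 P) ∧
        (∀ j k, j ≠ k →
          Disjoint (Set.Icc (a j) (a j + 1 + ε₁)) (Set.Icc (a k) (a k + 1 + ε₁))) ∧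
        (∀ j, ∀ y ∈ Set.Icc (a j) (a j + 1 + ε₁),
          ¬ ∃ (m : ℕ) (r : Fin R), 0 < m ∧ y = m * α r) := by
  rcases Nat.eq_zero_or_pos R with hR | hR
  · subst hR
    refine ⟨1/2, by norm_num, by norm_num, ?_⟩
    refine Stmt5Aux.assembly α (1/2) 3 (by norm_num) (by norm_num) (by norm_num) ?_
    intro a ha
    exact ⟨a, le_refl a, by linarith, fun y hy n r => r.elim0⟩
  · haveI : Nonempty (Fin R) := ⟨⟨0, hR⟩⟩
    have huniv : (Finset.univ : Finset (Fin R)).Nonempty := Finset.univ_nonempty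
    set c : ℝ := min 1 (Finset.univ.inf' huniv (fun r => α r - 1)) with hc
    have hc0 : 0 < c := by
      refine lt_min one_pos ?_
      rw [Finset.lt_inf'_iff]
      intro r _
      linarith [hα r]
    have hc1 : c ≤ 1 := min_le_left _ _
    have hcα : ∀ r, 1 + c ≤ α r := by
      intro r
      have h1 : c ≤ α r - 1 :=
        le_trans (min_le_right _ _) (Finset.inf'_le _ (Finset.mem_univ r))
      linarith
    set B : ℝ := Finset.univ.sup' huniv α with hB
    have hBα : ∀ r, α r ≤ B := fun r => Finset.le_sup' α (Finset.mem_univ r)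
    have hB1 : 1 ≤ B := by
      obtain ⟨r⟩ := ‹Nonempty (Fin R)›
      linarith [hα r, hBα r]
    set δ : ℝ := c / (8 * (B + 1)) with hδ
    have hδ0 : 0 < δ := by positivity
    obtain ⟨S₀, hS₀, hsynd₀⟩ := Stmt5Aux.syndetic α hδ0
    refine ⟨c/2, by positivity, by linarith, ?_⟩
    refine Stmt5Aux.assembly α (c/2) (S₀ + 2) (by positivity) (by linarith) (by linarith) ?_
    intro a ha
    obtain ⟨t, hat, htS, hcoord⟩ := hsynd₀ a ha
    refine ⟨t + c/4, by linarith, by linarith, ?_⟩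
    intro y hy n r hyn
    have hαr := hα r
    have hαr0 : (0:ℝ) < α r := by linarith
    obtain ⟨nr, hnr⟩ := Stmt5Aux.coord_int (x := t / α r) (hcoord r)
    rw [abs_lt] at hnr
    obtain ⟨hnr1, hnr2⟩ := hnr
    -- multiplied-out bounds
    have hmul : t - (nr:ℝ) * α r = (t / α r - nr) * α r := by
      rw [sub_mul, div_mul_cancel₀ _ hαr0.ne']
    have hb1 : t - (nr:ℝ) * α r < δ * α r := by
      rw [hmul]; exact mul_lt_mul_of_pos_right hnr2 hαr0
    have hb2 : -(δ * α r) < t - (nr:ℝ) * α r := by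
      rw [hmul]
      have := mul_lt_mul_of_pos_right hnr1 hαr0
      linarith
    have hδB : δ * B < c / 4 := by
      rw [hδ]
      rw [div_mul_eq_mul_div, div_lt_iff₀ (by positivity)]
      nlinarith
    have hδαr : δ * α r ≤ δ * B := mul_le_mul_of_nonneg_left (hBα r) hδ0.le
    -- lower bound: nr * α r < t + c/4
    have hlow : (nr:ℝ) * α r < t + c/4 := by linarith
    -- upper bound: t + c/4 + 1 + c/2 < (nr + 1) * α r
    have hup : t + c/4 + 1 + c/2 < ((nr:ℝ) + 1) * α r := by
      have hδsmall : δ ≤ c / 16 := by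
        rw [hδ, div_le_div_iff₀ (by positivity) (by norm_num)]
        nlinarith
      have h1 : δ * α r + c/4 + 1 + c/2 < α r := by
        have h2 : (1 - δ) * α r ≥ (1 - δ) * (1 + c) := by
          apply mul_le_mul_of_nonneg_left (hcα r)
          nlinarith
        nlinarith
      nlinarith
    -- y ∈ [t+c/4, t+c/4+1+c/2], y = n * α r
    obtain ⟨hy1, hy2⟩ := hy
    rw [hyn] at hy1 hy2
    have hlt1 : (nr:ℝ) * α r < (n:ℝ) * α r := by linarith
    have hlt2 : (n:ℝ) * α r < ((nr:ℝ) + 1) * α r := by linarith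
    have h1 : (nr:ℝ) < (n:ℝ) := by
      exact lt_of_mul_lt_mul_right (by linarith) hαr0.le
    have h2 : (n:ℝ) < (nr:ℝ) + 1 := by
      exact lt_of_mul_lt_mul_right (by linarith) hαr0.le
    have h1' : nr < n := by exact_mod_cast h1
    have h2' : n < nr + 1 := by exact_mod_cast h2
    omega
end

section
/- Let ε₁ > 0 and P > 0, and let (u_p)_{p≥1} be a sequence of real numbers with u₁ ≥ 1 and u_{p+1} ≥ u_p + 1 for all p ≥ 1. Suppose I₁, …, I_N are pairwise disjoint closed intervals, each of length 1 + ε₁, contained in [0, P], and such that no I_j contains any term of the sequence (u_p)_{p≥1}. Then the number of indices p with u_p ≤ P is at most P − N·ε₁. -/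
open MeasureTheory

lemma pack {ε₁ : ℝ} (hε : 0 ≤ ε₁) {N : ℕ} (a : Fin N → ℝ) (L R : ℝ) (hLR : L ≤ R)
    (S : Finset (Fin N))
    (hsub : ∀ j ∈ S, Set.Icc (a j) (a j + 1 + ε₁) ⊆ Set.Icc L R)
    (hdisj : ∀ j k, j ≠ k →
      Disjoint (Set.Icc (a j) (a j + 1 + ε₁)) (Set.Icc (a k) (a k + 1 + ε₁))) :
    (S.card : ℝ) * (1 + ε₁) ≤ R - L := by
  have h1 : ∑ j ∈ S, volume (Set.Icc (a j) (a j + 1 + ε₁)) ≤ volume (Set.Icc L R) := by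
    rw [← measure_biUnion_finset (fun j _ k _ hjk => hdisj j k hjk)
      (fun j _ => measurableSet_Icc)]
    exact measure_mono (Set.iUnion₂_subset hsub)
  have h2 : ∀ j : Fin N, volume (Set.Icc (a j) (a j + 1 + ε₁)) = ENNReal.ofReal (1 + ε₁) := by
    intro j; rw [Real.volume_Icc]; ring_nf
  simp only [h2, Finset.sum_const, nsmul_eq_mul, Real.volume_Icc] at h1
  have h3 : ENNReal.ofReal ((S.card : ℝ) * (1 + ε₁)) ≤ ENNReal.ofReal (R - L) := by
    rwa [ENNReal.ofReal_mul (by positivity), ENNReal.ofReal_natCast]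
  rwa [ENNReal.ofReal_le_ofReal_iff (by linarith)] at h3

section Main
variable (ε₁ P : ℝ) (hε₁ : 0 < ε₁) (hP : 0 < P)
    (u : ℕ → ℝ) (hu1 : 1 ≤ u 1) (hgap : ∀ p, 1 ≤ p → u p + 1 ≤ u (p + 1))
    (N : ℕ) (a : Fin N → ℝ)
    (hsub : ∀ j, Set.Icc (a j) (a j + 1 + ε₁) ⊆ Set.Icc 0 P)
    (hdisj : ∀ j k, j ≠ k →
      Disjoint (Set.Icc (a j) (a j + 1 + ε₁)) (Set.Icc (a k) (a k + 1 + ε₁)))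
    (havoid : ∀ j, ∀ p, 1 ≤ p → u p ∉ Set.Icc (a j) (a j + 1 + ε₁))

include hε₁ hu1 hgap hsub hdisj havoid in
/-- Key induction: `u p ≥ p + ε₁ · #{j : a j + 1 + ε₁ ≤ u p}` for `p ≥ 1`. -/
lemma keyind : ∀ p : ℕ, 1 ≤ p →
    (p : ℝ) + ε₁ * (Finset.univ.filter (fun j : Fin N => a j + 1 + ε₁ ≤ u p)).card ≤ u p := by
  intro p hp
  induction p with
  | zero => omega
  | succ q ih =>
    rcases Nat.eq_or_lt_of_le hp with h1 | h1
    · -- q + 1 = 1, i.e. q = 0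
      have hq : q = 0 := by omega
      subst hq
      set Sb := Finset.univ.filter (fun j : Fin N => a j + 1 + ε₁ ≤ u 1) with hSb
      have hsubb : ∀ j ∈ Sb, Set.Icc (a j) (a j + 1 + ε₁) ⊆ Set.Icc 0 (u 1) := by
        intro j hj
        simp only [hSb, Finset.mem_filter] at hj
        have h0 : 0 ≤ a j := (hsub j (Set.left_mem_Icc.2 (by linarith))).1
        exact Set.Icc_subset_Icc h0 hj.2
      have hpack := pack hε₁.le a 0 (u 1) (by linarith) Sb hsubb hdisj
      rcases Nat.eq_zero_or_pos Sb.card with h0 | h0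
      · rw [h0]; push_cast; linarith
      · have : (1:ℝ) ≤ Sb.card := by exact_mod_cast h0
        push_cast
        nlinarith [hε₁.le]
    · have hq : 1 ≤ q := by omega
      have ihq := ih hq
      -- new intervals
      set Snew := Finset.univ.filter
        (fun j : Fin N => u q < a j + 1 + ε₁ ∧ a j + 1 + ε₁ ≤ u (q+1)) with hSnew
      have hbelow : ∀ j, u q < a j + 1 + ε₁ → u q < a j := by
        intro j h
        by_contra hc
        exact havoid j q hq ⟨le_of_not_gt hc, h.le⟩
      have hsubnew : ∀ j ∈ Snew, Set.Icc (a j) (a j + 1 + ε₁) ⊆ Set.Icc (u q) (u (q+1)) := by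
        intro j hj
        simp only [hSnew, Finset.mem_filter] at hj
        exact Set.Icc_subset_Icc (hbelow j hj.2.1).le hj.2.2
      have hpack := pack hε₁.le a (u q) (u (q+1)) (by linarith [hgap q hq]) Snew hsubnew hdisj
      -- gap bound
      have hgapbd : u q + 1 + Snew.card * ε₁ ≤ u (q+1) := by
        rcases Nat.eq_zero_or_pos Snew.card with h0 | h0
        · rw [h0]; simpa using hgap q hq
        · have : (1:ℝ) ≤ Snew.card := by exact_mod_cast h0
          nlinarith
      -- count bound
      have hcount : (Finset.univ.filter (fun j : Fin N => a j + 1 + ε₁ ≤ u (q+1))).card ≤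
          (Finset.univ.filter (fun j : Fin N => a j + 1 + ε₁ ≤ u q)).card + Snew.card := by
        rw [← Finset.card_union_of_disjoint]
        · apply Finset.card_le_card
          intro j hj
          simp only [Finset.mem_filter, Finset.mem_union, hSnew, Finset.mem_univ,
            true_and] at hj ⊢
          rcases le_or_gt (a j + 1 + ε₁) (u q) with h | h
          · exact Or.inl h
          · exact Or.inr ⟨h, hj⟩
        · rw [Finset.disjoint_left]
          intro j hj hj'
          simp only [hSnew, Finset.mem_filter] at hj hj'
          linarith [hj.2, hj'.2.1]
      have : ((Finset.univ.filter (fun j : Fin N => a j + 1 + ε₁ ≤ u (q+1))).card : ℝ) ≤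
          (Finset.univ.filter (fun j : Fin N => a j + 1 + ε₁ ≤ u q)).card + Snew.card := by
        exact_mod_cast hcount
      push_cast
      nlinarith [hε₁.le]
end Main


/-- Counting lemma: if `u 1 ≥ 1`, the gaps of `u` are at least `1`, and
`I₁, …, I_N` are pairwise disjoint closed intervals of length `1 + ε₁` contained in
`[0, P]`, none containing any term `u p` (`p ≥ 1`), then the number of indices `p ≥ 1`
with `u p ≤ P` is at most `P - N * ε₁`. -/
theorem stmt6 (ε₁ P : ℝ) (hε₁ : 0 < ε₁) (hP : 0 < P)
    (u : ℕ → ℝ) (hu1 : 1 ≤ u 1) (hgap : ∀ p, 1 ≤ p → u p + 1 ≤ u (p + 1))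
    (N : ℕ) (a : Fin N → ℝ)
    (hsub : ∀ j, Set.Icc (a j) (a j + 1 + ε₁) ⊆ Set.Icc 0 P)
    (hdisj : ∀ j k, j ≠ k →
      Disjoint (Set.Icc (a j) (a j + 1 + ε₁)) (Set.Icc (a k) (a k + 1 + ε₁)))
    (havoid : ∀ j, ∀ p, 1 ≤ p → u p ∉ Set.Icc (a j) (a j + 1 + ε₁)) :
    (Nat.card {p : ℕ | 1 ≤ p ∧ u p ≤ P} : ℝ) ≤ P - N * ε₁ := by
  have key := keyind ε₁ P hε₁ u hu1 hgap N a hsub hdisj havoid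
  -- u p ≥ p for p ≥ 1
  have hup : ∀ p : ℕ, 1 ≤ p → (p : ℝ) ≤ u p := by
    intro p hp
    have := key p hp
    have hc : (0:ℝ) ≤ ((Finset.univ.filter (fun j : Fin N => a j + 1 + ε₁ ≤ u p)).card : ℝ) :=
      Nat.cast_nonneg _
    nlinarith
  -- monotone
  have hmono : ∀ p q : ℕ, 1 ≤ p → p ≤ q → u p ≤ u q := by
    intro p q hp hpq
    induction q with
    | zero => omega
    | succ r ih =>
      rcases Nat.eq_or_lt_of_le hpq with h | h
      · rw [h]
      · have hpr : p ≤ r := by omega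
        have hr : 1 ≤ r := by omega
        linarith [ih hpr, hgap r hr]
  -- the set as a finset
  set T : Finset ℕ := (Finset.Icc 1 ⌈P⌉₊).filter (fun p => u p ≤ P) with hT
  have hset : {p : ℕ | 1 ≤ p ∧ u p ≤ P} = ↑T := by
    ext p
    simp only [Set.mem_setOf_eq, hT, Finset.coe_filter, Finset.mem_Icc, Set.mem_setOf_eq]
    constructor
    · rintro ⟨h1, h2⟩
      refine ⟨⟨h1, ?_⟩, h2⟩
      have h3 : (p:ℝ) ≤ ⌈P⌉₊ := le_trans (le_trans (hup p h1) h2) (Nat.le_ceil P)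
      exact_mod_cast h3
    · rintro ⟨⟨h1, _⟩, h2⟩; exact ⟨h1, h2⟩
  rw [hset, Nat.card_coe_set_eq, Set.ncard_coe_finset]
  -- global packing: N * (1+ε₁) ≤ P
  have hglob := pack hε₁.le a 0 P (by linarith) Finset.univ (fun j _ => hsub j) hdisj
  simp only [Finset.card_univ, Fintype.card_fin] at hglob
  rcases Finset.eq_empty_or_nonempty T with hTe | hTne
  · rw [hTe]; simp; nlinarith
  · set K := T.max' hTne with hK
    have hKmem : K ∈ T := T.max'_mem hTne
    simp only [hT, Finset.mem_filter, Finset.mem_Icc] at hKmem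
    obtain ⟨⟨hK1, _⟩, hKP⟩ := hKmem
    -- T = Icc 1 K
    have hTeq : T = Finset.Icc 1 K := by
      ext p
      simp only [hT, Finset.mem_filter, Finset.mem_Icc]
      constructor
      · rintro ⟨⟨h1, h2⟩, h3⟩
        exact ⟨h1, Finset.le_max' T p (by simp [hT, Finset.mem_filter, Finset.mem_Icc]; exact ⟨⟨h1, h2⟩, h3⟩)⟩
      · rintro ⟨h1, h2⟩
        refine ⟨⟨h1, ?_⟩, le_trans (hmono p K h1 h2) hKP⟩
        have : (p:ℝ) ≤ ⌈P⌉₊ :=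
          le_trans (le_trans (hup p h1) (le_trans (hmono p K h1 h2) hKP)) (Nat.le_ceil P)
        exact_mod_cast this
    rw [hTeq, Nat.card_Icc]
    have hcard : ((K + 1 - 1 : ℕ) : ℝ) = (K : ℝ) := by
      have : K + 1 - 1 = K := by omega
      rw [this]
    rw [hcard]
    -- intervals above u K
    set m := (Finset.univ.filter (fun j : Fin N => a j + 1 + ε₁ ≤ u K)).card with hm
    have hkey := key K hK1
    set Sup := Finset.univ.filter (fun j : Fin N => u K < a j + 1 + ε₁) with hSup
    have hsubup : ∀ j ∈ Sup, Set.Icc (a j) (a j + 1 + ε₁) ⊆ Set.Icc (u K) P := by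
      intro j hj
      simp only [hSup, Finset.mem_filter] at hj
      have hb : u K < a j := by
        by_contra hc
        exact havoid j K hK1 ⟨le_of_not_gt hc, hj.2.le⟩
      intro x hx
      exact ⟨le_trans hb.le hx.1, (hsub j hx).2⟩
    have hpackup := pack hε₁.le a (u K) P hKP Sup hsubup hdisj
    have hsplit : m + Sup.card = N := by
      have hdisST : Disjoint (Finset.univ.filter (fun j : Fin N => a j + 1 + ε₁ ≤ u K))
          (Finset.univ.filter (fun j : Fin N => u K < a j + 1 + ε₁)) := by
        rw [Finset.disjoint_left]
        intro j hj hj'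
        simp only [Finset.mem_filter] at hj hj'
        linarith [hj.2, hj'.2]
      have hcu := Finset.card_union_of_disjoint hdisST
      have hun : (Finset.univ.filter (fun j : Fin N => a j + 1 + ε₁ ≤ u K)) ∪
          (Finset.univ.filter (fun j : Fin N => u K < a j + 1 + ε₁)) = Finset.univ := by
        rw [Finset.eq_univ_iff_forall]
        intro j
        simp only [Finset.mem_union, Finset.mem_filter, Finset.mem_univ, true_and]
        exact le_or_gt (a j + 1 + ε₁) (u K)
      rw [hun, Finset.card_univ, Fintype.card_fin] at hcu
      exact hcu.symm
    have hNc : (N : ℝ) = (m : ℝ) + Sup.card := by exact_mod_cast hsplit.symm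
    have hSc : (0:ℝ) ≤ (Sup.card : ℝ) := Nat.cast_nonneg _
    nlinarith [hε₁.le]
end

section
/- Let α₁, …, α_R be real numbers, each strictly larger than 1, and let 𝒜 = {m·α_r : m a positive integer, r ∈ {1,…,R}}. Then there is no sequence (u_p)_{p≥1} of positive real numbers satisfying simultaneously: u₁ ≥ 1; u_{p+1} ≥ u_p + 1 for all p ≥ 1; u_p ∈ 𝒜 for every p ≥ 1; and u_p/p → 1 as p → ∞. -/
open Filter

def IsRes (a : ℝ) : Prop := ∃ k : ℕ, 0 < k ∧ ∃ z : ℤ, (k : ℝ) * a = z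

lemma exists_minden (y : ℝ) (h : IsRes y) :
    ∃ (g : ℕ) (z : ℤ), 0 < g ∧ (g : ℝ) * y = z ∧
      (∀ k : ℕ, 0 < k → (∃ w : ℤ, (k : ℝ) * y = w) → g ∣ k) ∧ Nat.Coprime g z.natAbs := by
  classical
  obtain ⟨hex⟩ : Nonempty (∃ k : ℕ, 0 < k ∧ ∃ z : ℤ, (k : ℝ) * y = z) := ⟨h⟩
  set g := Nat.find hex with hgdef
  obtain ⟨hgpos, z, hz⟩ := Nat.find_spec hex
  have hmin : ∀ k : ℕ, 0 < k → (∃ w : ℤ, (k : ℝ) * y = w) → g ≤ k := fun k hk hw =>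
    Nat.find_min' hex ⟨hk, hw⟩
  have hdvd : ∀ k : ℕ, 0 < k → (∃ w : ℤ, (k : ℝ) * y = w) → g ∣ k := by
    rintro k hk ⟨w, hw⟩
    have hdpos : 0 < Nat.gcd g k := Nat.gcd_pos_of_pos_left k hgpos
    have hdy : ((Nat.gcd g k : ℕ) : ℝ) * y = ((Nat.gcdA g k * z + Nat.gcdB g k * w : ℤ) : ℝ) := by
      have h1 : ((Nat.gcd g k : ℕ) : ℤ) = g * Nat.gcdA g k + k * Nat.gcdB g k :=
        Nat.gcd_eq_gcd_ab g k
      have h2 : ((Nat.gcd g k : ℕ) : ℝ)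
          = (g : ℝ) * ((Nat.gcdA g k : ℤ) : ℝ) + (k : ℝ) * ((Nat.gcdB g k : ℤ) : ℝ) := by
        exact_mod_cast congrArg (fun t : ℤ => (t : ℝ)) h1
      rw [h2]
      push_cast
      linear_combination ((Nat.gcdA g k : ℤ) : ℝ) * hz + ((Nat.gcdB g k : ℤ) : ℝ) * hw
    have hle : g ≤ Nat.gcd g k := hmin _ hdpos ⟨_, hdy⟩
    have heq : Nat.gcd g k = g := le_antisymm (Nat.gcd_le_left k hgpos) hle
    exact heq ▸ Nat.gcd_dvd_right g k
  refine ⟨g, z, hgpos, hz, hdvd, ?_⟩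
  by_contra hne
  set e := Nat.gcd g z.natAbs with he
  have hepos : 0 < e := Nat.gcd_pos_of_pos_left _ hgpos
  have h2e : 2 ≤ e := by
    rcases Nat.lt_or_ge e 2 with h' | h'
    · exfalso; exact hne (by omega)
    · exact h'
  have hedvdg : e ∣ g := Nat.gcd_dvd_left _ _
  have hedvdz : (e : ℤ) ∣ z := by
    have h1 : e ∣ z.natAbs := Nat.gcd_dvd_right _ _
    exact Int.natAbs_dvd_natAbs.mp (by simpa using h1)
  obtain ⟨w, hw⟩ := hedvdz
  have hgey : ((g / e : ℕ) : ℝ) * y = (w : ℝ) := by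
    have hcancel : ((g / e : ℕ) : ℝ) * e = g := by
      exact_mod_cast congrArg (fun t : ℕ => (t : ℝ)) (Nat.div_mul_cancel hedvdg)
    have hepos' : (0 : ℝ) < e := by exact_mod_cast hepos
    have : ((g / e : ℕ) : ℝ) * y * e = (w : ℝ) * e := by
      calc ((g / e : ℕ) : ℝ) * y * e = (((g / e : ℕ) : ℝ) * e) * y := by ring
        _ = (g : ℝ) * y := by rw [hcancel]
        _ = (z : ℝ) := hz
        _ = (w : ℝ) * e := by rw [hw]; push_cast; ring
    exact mul_right_cancel₀ hepos'.ne' this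
  have hgepos : 0 < g / e := Nat.div_pos (Nat.le_of_dvd hgpos hedvdg) hepos
  have hle := hmin (g / e) hgepos ⟨w, hgey⟩
  have : g / e < g := Nat.div_lt_self hgpos h2e
  omega

lemma window_aux (u : ℕ → ℝ) (h1 : 1 ≤ u 1)
    (hgap : ∀ p, 1 ≤ p → u p + 1 ≤ u (p + 1))
    (hlim : Filter.Tendsto (fun p : ℕ => u p / p) Filter.atTop (nhds 1))
    (L : ℕ) (hL : 1 ≤ L) (ε : ℝ) (hε : 0 < ε) :
    ∃ P : ℕ, 1 ≤ P ∧ u (P + L) ≤ u P + L + ε := by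
  by_contra hcon
  push_neg at hcon
  have hiter : ∀ n : ℕ, u 1 + n * ((L : ℝ) + ε) ≤ u (1 + n * L) := by
    intro n
    induction n with
    | zero => simp
    | succ n ih =>
      have h' := hcon (1 + n * L) (by omega)
      have heq : 1 + (n + 1) * L = (1 + n * L) + L := by ring
      rw [heq]
      push_cast
      push_cast at ih
      linarith
  have hmain : ∀ n : ℕ, 1 ≤ n →
      1 + ε / (2 * L) ≤ u (1 + n * L) / ((1 + n * L : ℕ) : ℝ) := by
    intro n hn
    have hden : (0 : ℝ) < ((1 + n * L : ℕ) : ℝ) := by positivity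
    rw [le_div_iff₀ hden]
    have h1' := hiter n
    have hL' : (1 : ℝ) ≤ L := by exact_mod_cast hL
    have hn' : (1 : ℝ) ≤ n := by exact_mod_cast hn
    have hc : ε / (2 * L) * (2 * L) = ε := div_mul_cancel₀ ε (by positivity)
    have hcpos : 0 ≤ ε / (2 * L) := by positivity
    push_cast
    nlinarith [mul_nonneg hcpos (sub_nonneg.mpr (one_le_mul_of_one_le_of_one_le hn' hL'))]
  have htop : Filter.Tendsto (fun n : ℕ => 1 + n * L) Filter.atTop Filter.atTop := by
    apply Filter.tendsto_atTop_mono (f := fun n : ℕ => n)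
    · intro n
      calc n = n * 1 := (Nat.mul_one n).symm
        _ ≤ n * L := Nat.mul_le_mul_left n hL
        _ ≤ 1 + n * L := by omega
    · exact Filter.tendsto_id
  have htend : Filter.Tendsto (fun n : ℕ => u (1 + n * L) / ((1 + n * L : ℕ) : ℝ))
      Filter.atTop (nhds 1) := hlim.comp htop
  have hge := ge_of_tendsto htend (Filter.eventually_atTop.mpr ⟨1, hmain⟩)
  have hL' : (1 : ℝ) ≤ L := by exact_mod_cast hL
  have h2 : 0 < ε / (2 * L) := by positivity
  linarith
set_option maxHeartbeats 2000000 in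
/-- There is no sequence of positive reals `u` with `u 1 ≥ 1`, gaps at least `1`,
all values in `𝒜 = {m * α r : m positive integer}` (with all `α r > 1`),
and `u p / p → 1`. -/
theorem stmt7 (R : ℕ) (α : Fin R → ℝ) (hα : ∀ r, 1 < α r) :
    ¬ ∃ u : ℕ → ℝ,
      (∀ p, 1 ≤ p → 0 < u p) ∧
      1 ≤ u 1 ∧
      (∀ p, 1 ≤ p → u p + 1 ≤ u (p + 1)) ∧
      (∀ p, 1 ≤ p → ∃ (m : ℕ) (r : Fin R), 0 < m ∧ u p = m * α r) ∧
      Filter.Tendsto (fun p : ℕ => u p / p) Filter.atTop (nhds 1) := by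
  rintro ⟨u, hpos, h1, hgap, hmem, hlim⟩
  classical
  obtain ⟨m0, r0, -, -⟩ := hmem 1 le_rfl
  -- telescoped gap bound
  have hstep : ∀ p k : ℕ, 1 ≤ p → u p + k ≤ u (p + k) := by
    intro p k hp
    induction k with
    | zero => simp
    | succ k ih =>
      have h2 := hgap (p + k) (by omega)
      have : u p + ((k + 1 : ℕ) : ℝ) = (u p + (k : ℕ)) + 1 := by push_cast; ring
      rw [this, show p + (k + 1) = (p + k) + 1 from by omega]
      linarith
  -- minimal denominators for the rational α r
  have hX : ∀ r : Fin R, ∃ (g : ℕ) (z : ℤ), 0 < g ∧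
      (IsRes (α r) → ((g : ℝ) * α r = z ∧ 2 ≤ z ∧
        (∀ k : ℕ, 0 < k → (∃ w : ℤ, (k : ℝ) * α r = w) → g ∣ k) ∧
        Nat.Coprime g z.natAbs)) := by
    intro r
    by_cases h : IsRes (α r)
    · obtain ⟨g, z, hg, hz, hmin, hcop⟩ := exists_minden (α r) h
      refine ⟨g, z, hg, fun _ => ⟨hz, ?_, hmin, hcop⟩⟩
      have hg1 : (1 : ℝ) ≤ g := by exact_mod_cast hg
      have : (1 : ℝ) < (z : ℝ) := by
        have := hα r
        nlinarith
      have : (1 : ℤ) < z := by exact_mod_cast this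
      omega
    · exact ⟨1, 1, one_pos, fun h' => absurd h' h⟩
  choose kk nn hkkpos hknP using hX
  set RF : Finset (Fin R) := Finset.univ.filter (fun r => IsRes (α r)) with hRF
  set A0 : ℕ := ∏ r ∈ RF, (nn r).natAbs with hA0
  set B : ℕ := ∏ r ∈ RF, kk r with hB
  have hRFres : ∀ r ∈ RF, IsRes (α r) := by
    intro r hr; exact (Finset.mem_filter.mp hr).2
  have hA0pos : 0 < A0 := by
    apply Finset.prod_pos
    intro r hr
    have h2 := (hknP r (hRFres r hr)).2.1
    omega
  have hBpos : 0 < B := Finset.prod_pos fun r _ => hkkpos r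
  set L : ℕ := (R + 2) * A0 with hLdef
  have hLpos : 1 ≤ L := by
    have : 1 * 1 ≤ (R + 2) * A0 := Nat.mul_le_mul (by omega) hA0pos
    omega
  -- the separation constant ε3
  set S : Finset ℝ := ((Finset.Icc 1 L ×ˢ (Finset.univ : Finset (Fin R))).image
      (fun p => |(p.1 : ℝ) * α p.2 - round ((p.1 : ℝ) * α p.2)|)).filter (fun v => 0 < v)
    with hS
  set ε3 : ℝ := if hS : S.Nonempty then S.min' hS else 1 with hε3def
  have hε3pos : 0 < ε3 := by
    rw [hε3def]
    split_ifs with hne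
    · have := S.min'_mem hne
      exact (Finset.mem_filter.mp this).2
    · norm_num
  have hsep : ∀ (k : ℕ) (r : Fin R), 0 < k → k ≤ L →
      (k : ℝ) * α r = round ((k : ℝ) * α r) ∨ ε3 ≤ |(k : ℝ) * α r - round ((k : ℝ) * α r)| := by
    intro k r hk hkL
    by_cases h0 : (k : ℝ) * α r = round ((k : ℝ) * α r)
    · exact Or.inl h0
    · right
      have hvpos : 0 < |(k : ℝ) * α r - round ((k : ℝ) * α r)| :=
        abs_pos.mpr (sub_ne_zero.mpr h0)
      have hmem' : |(k : ℝ) * α r - round ((k : ℝ) * α r)| ∈ S := by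
        rw [hS]
        refine Finset.mem_filter.mpr ⟨Finset.mem_image.mpr ⟨(k, r), ?_, rfl⟩, hvpos⟩
        exact Finset.mem_product.mpr ⟨Finset.mem_Icc.mpr ⟨hk, hkL⟩, Finset.mem_univ r⟩
      have hne : S.Nonempty := ⟨_, hmem'⟩
      rw [hε3def, dif_pos hne]
      exact Finset.min'_le S _ hmem'
  set ε : ℝ := min (min (1 / 3) (1 / (2 * B + 2))) (ε3 / 2) with hεdef
  have hεpos : 0 < ε := by
    apply lt_min (lt_min (by norm_num) (by positivity)) (by positivity)
  have hε13 : ε ≤ 1 / 3 := le_trans (min_le_left _ _) (min_le_left _ _)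
  have hεB : ε ≤ 1 / (2 * B + 2) := le_trans (min_le_left _ _) (min_le_right _ _)
  have hεε3 : ε < ε3 := lt_of_le_of_lt (min_le_right _ _) (by linarith)
  -- window
  obtain ⟨P, hP, hPL⟩ := window_aux u h1 hgap hlim L hLpos ε hεpos
  set x : ℝ := u P with hxdef
  have hx : ∀ j : ℕ, ∃ (mm : ℕ) (r : Fin R), j ≤ L →
      (0 < mm ∧ x + j ≤ mm * α r ∧ (mm : ℝ) * α r ≤ x + j + ε) := by
    intro j
    by_cases hj : j ≤ L
    · obtain ⟨mm, r, hm0, hval⟩ := hmem (P + j) (by omega)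
      refine ⟨mm, r, fun _ => ⟨hm0, ?_, ?_⟩⟩
      · rw [← hval]; exact hstep P j hP
      · rw [← hval]
        have h2 := hstep (P + j) (L - j) (by omega)
        rw [show P + j + (L - j) = P + L from by omega] at h2
        have hc : ((L - j : ℕ) : ℝ) = (L : ℝ) - j := by
          push_cast [Nat.cast_sub hj]; ring
        rw [hc] at h2
        linarith
    · exact ⟨1, r0, fun h => absurd h hj⟩
  choose m rr key using hx
  -- pair lemma
  have hpair : ∀ i j : ℕ, i < j → j ≤ L → rr i = rr j → IsRes (α (rr j)) := by
    intro i j hij hjL hr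
    obtain ⟨hmi, hi1, hi2⟩ := key i (le_trans hij.le hjL)
    obtain ⟨hmj, hj1, hj2⟩ := key j hjL
    rw [hr] at hi1 hi2
    have hαr := hα (rr j)
    have hji : (1 : ℝ) ≤ (j : ℝ) - (i : ℝ) := by
      have : (i : ℝ) + 1 ≤ j := by exact_mod_cast hij
      linarith
    have hmlt : m i < m j := by
      have hlt : (m i : ℝ) * α (rr j) < (m j : ℝ) * α (rr j) := by linarith
      exact_mod_cast (mul_lt_mul_iff_of_pos_right (by linarith : (0 : ℝ) < α (rr j))).mp hlt
    set k := m j - m i with hkdef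
    have hk0 : 0 < k := by omega
    have hkc : (k : ℝ) = (m j : ℝ) - m i := by
      rw [hkdef]; push_cast [Nat.cast_sub hmlt.le]; ring
    have e1 : (j : ℝ) - i - ε ≤ (k : ℝ) * α (rr j) := by
      rw [hkc, sub_mul]; linarith
    have e2 : (k : ℝ) * α (rr j) ≤ (j : ℝ) - i + ε := by
      rw [hkc, sub_mul]; linarith
    have hjL' : (j : ℝ) ≤ L := by exact_mod_cast hjL
    have hkL : k ≤ L := by
      have hk1 : (k : ℝ) * 1 ≤ (k : ℝ) * α (rr j) :=
        mul_le_mul_of_nonneg_left (le_of_lt hαr) (by positivity)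
      have hi0 : (0 : ℝ) ≤ i := by positivity
      have : (k : ℝ) < (L : ℝ) + 1 := by
        rw [mul_one] at hk1; linarith
      have : k < L + 1 := by exact_mod_cast this
      omega
    have hround : round ((k : ℝ) * α (rr j)) = (j : ℤ) - i := by
      rw [round_eq]
      apply Int.floor_eq_iff.mpr
      constructor
      · push_cast; linarith
      · push_cast; linarith
    rcases hsep k (rr j) hk0 hkL with h0 | hge
    · exact ⟨k, hk0, ⟨(j : ℤ) - i, by rw [h0, hround]⟩⟩
    · exfalso
      have habs : |(k : ℝ) * α (rr j) - round ((k : ℝ) * α (rr j))| ≤ ε := by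
        rw [hround, abs_le]
        constructor <;> · push_cast; linarith
      linarith
  -- the final contradiction builder
  have final : ∀ J : Fin (R + 2) → ℕ, (∀ s, J s ≤ L) → Function.Injective J →
      (∀ s, ¬ IsRes (α (rr (J s)))) → False := by
    intro J hJL hJinj hJres
    have hinj : Function.Injective (fun s => rr (J s)) := by
      intro s t hst
      by_contra hne
      have hJne : J s ≠ J t := fun h => hne (hJinj h)
      rcases lt_or_gt_of_ne hJne with h | h
      · exact hJres t (hpair _ _ h (hJL t) hst)
      · exact hJres s (hpair _ _ h (hJL s) hst.symm)
    have hcard := Fintype.card_le_of_injective _ hinj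
    simp only [Fintype.card_fin] at hcard
    omega
  by_cases hex : ∃ j, j ≤ L ∧ IsRes (α (rr j))
  · -- main case
    obtain ⟨j₀, hj₀L, hj₀R⟩ := hex
    set y : ℝ := (m j₀ : ℝ) * α (rr j₀) - j₀ with hydef
    -- B * v is an integer for every resonantly covered j
    have hBz : ∀ j, j ≤ L → IsRes (α (rr j)) →
        ∃ z : ℤ, (B : ℝ) * ((m j : ℝ) * α (rr j) - j) = z := by
      intro j hj hr
      have hmemRF : rr j ∈ RF := by
        rw [hRF]; exact Finset.mem_filter.mpr ⟨Finset.mem_univ _, hr⟩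
      obtain ⟨c, hc⟩ := Finset.dvd_prod_of_mem kk hmemRF
      have h1 := (hknP (rr j) hr).1
      refine ⟨(c : ℤ) * ((m j : ℤ) * nn (rr j) - (kk (rr j) : ℤ) * j), ?_⟩
      rw [← hB] at hc
      rw [hc]
      push_cast
      linear_combination (c : ℝ) * (m j : ℝ) * h1
    have hgridy : ∀ j, j ≤ L → IsRes (α (rr j)) → (m j : ℝ) * α (rr j) - j = y := by
      intro j hj hr
      obtain ⟨z, hz⟩ := hBz j hj hr
      obtain ⟨z₀, hz₀⟩ := hBz j₀ hj₀L hj₀R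
      obtain ⟨-, hl1, hl2⟩ := key j hj
      obtain ⟨-, hl1', hl2'⟩ := key j₀ hj₀L
      have hvv : |((m j : ℝ) * α (rr j) - j) - y| ≤ ε := by
        rw [hydef, abs_le]; constructor <;> linarith
      have hB1 : (1 : ℝ) ≤ B := by exact_mod_cast hBpos
      have hBε : (B : ℝ) * ε < 1 := by
        have h2 : (B : ℝ) * ε ≤ (B : ℝ) * (1 / (2 * B + 2)) :=
          mul_le_mul_of_nonneg_left hεB (by positivity)
        have h3 : (B : ℝ) * (1 / (2 * B + 2)) < 1 := by
          rw [mul_one_div, div_lt_one (by positivity)]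
          linarith
        linarith
      have hzz : z = z₀ := by
        have hdiff : (z : ℝ) - z₀ = (B : ℝ) * (((m j : ℝ) * α (rr j) - j) - y) := by
          rw [← hz, ← hz₀, hydef]; ring
        have habs : |(z : ℝ) - (z₀ : ℝ)| < 1 := by
          rw [hdiff, abs_mul, abs_of_nonneg (by positivity : (0:ℝ) ≤ (B : ℝ))]
          calc (B : ℝ) * |((m j : ℝ) * α (rr j) - j) - y|
              ≤ (B : ℝ) * ε := mul_le_mul_of_nonneg_left hvv (by positivity)
            _ < 1 := hBε
        have h' : |z - z₀| < 1 := by exact_mod_cast (by push_cast; exact habs : |((z - z₀ : ℤ) : ℝ)| < 1)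
        have h'' := abs_lt.mp h'
        omega
      have hzero : (B : ℝ) * (((m j : ℝ) * α (rr j) - j) - y) = 0 := by
        have hdiff : (z : ℝ) - z₀ = (B : ℝ) * (((m j : ℝ) * α (rr j) - j) - y) := by
          rw [← hz, ← hz₀, hydef]; ring
        rw [← hdiff, hzz]; ring
      have hB0 : (B : ℝ) ≠ 0 := by positivity
      have := (mul_eq_zero.mp hzero).resolve_left hB0
      linarith
    -- minimal denominator of y
    have hQ : IsRes y := by
      refine ⟨B, hBpos, ?_⟩
      obtain ⟨z₀, hz₀⟩ := hBz j₀ hj₀L hj₀R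
      exact ⟨z₀, by rw [hydef]; exact hz₀⟩
    obtain ⟨g, G, hgpos, hG, hgdvd, hgG⟩ := exists_minden y hQ
    -- divisibility for covered resonant j
    have hkey2 : ∀ j, j ≤ L → IsRes (α (rr j)) →
        g ∣ kk (rr j) ∧ (nn (rr j) : ℤ) ∣ (G + (g : ℤ) * (j : ℤ)) := by
      intro j hjL hr
      have hy : (m j : ℝ) * α (rr j) - j = y := hgridy j hjL hr
      obtain ⟨hnnα, hnn2, hmink, hcopr⟩ := hknP (rr j) hr
      have hky : ∃ w : ℤ, ((kk (rr j) : ℕ) : ℝ) * y = w := by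
        refine ⟨(m j : ℤ) * nn (rr j) - (kk (rr j) : ℤ) * j, ?_⟩
        rw [← hy]; push_cast
        linear_combination (m j : ℝ) * hnnα
      have hgk : g ∣ kk (rr j) := hgdvd _ (hkkpos _) hky
      refine ⟨hgk, ?_⟩
      obtain ⟨t, ht⟩ := hgk
      have htdvd : t ∣ kk (rr j) := ⟨g, by rw [ht]; ring⟩
      have hint : (t : ℤ) * (G + (g : ℤ) * j) = (m j : ℤ) * nn (rr j) := by
        have htr : ((kk (rr j) : ℕ) : ℝ) = (g : ℝ) * t := by exact_mod_cast ht
        have hreal : ((t : ℕ) : ℝ) * ((G : ℝ) + (g : ℝ) * j) = (m j : ℝ) * ((nn (rr j) : ℤ) : ℝ) := by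
          linear_combination (-(t : ℝ)) * hG + (-(y + (j : ℝ))) * htr
            + (-((kk (rr j) : ℕ) : ℝ)) * hy + (m j : ℝ) * hnnα
        exact_mod_cast hreal
      have hdvd1 : (nn (rr j) : ℤ) ∣ (t : ℤ) * (G + (g : ℤ) * j) :=
        ⟨m j, by rw [hint]; ring⟩
      have hcopt : IsCoprime ((nn (rr j)) : ℤ) (t : ℤ) := by
        rw [Int.isCoprime_iff_gcd_eq_one]
        have h1 : Nat.Coprime t (nn (rr j)).natAbs :=
          Nat.Coprime.coprime_dvd_left htdvd hcopr
        have h2 : Int.gcd (nn (rr j)) (t : ℤ) = Nat.gcd (nn (rr j)).natAbs t := by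
          simp [Int.gcd]
        rw [h2]
        exact h1.symm
      exact hcopt.dvd_of_dvd_mul_left hdvd1
    -- the coprime modulus
    set C : Finset (Fin R) := RF.filter (fun r => g ∣ kk r) with hC
    set A1 : ℕ := ∏ r ∈ C, (nn r).natAbs with hA1
    have hA1dvd : A1 ∣ A0 := Finset.prod_dvd_prod_of_subset _ _ _ (Finset.filter_subset _ _)
    have hA1pos : 0 < A1 := by
      apply Finset.prod_pos
      intro r hr
      have h2 := (hknP r (hRFres r (Finset.mem_filter.mp hr).1)).2.1
      omega
    have hA1le : A1 ≤ A0 := Nat.le_of_dvd hA0pos hA1dvd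
    have hcopgA1 : Nat.Coprime g A1 := by
      apply Nat.Coprime.prod_right
      intro r hr
      obtain ⟨hrRF, hgk⟩ := Finset.mem_filter.mp hr
      exact Nat.Coprime.coprime_dvd_left hgk (hknP r (hRFres r hrRF)).2.2.2
    have hiso : IsCoprime (g : ℤ) (A1 : ℤ) := by
      rw [Int.isCoprime_iff_gcd_eq_one, Int.gcd_natCast_natCast]
      exact hcopgA1
    obtain ⟨a, b, hab⟩ := hiso
    have hA1z : (0 : ℤ) < (A1 : ℤ) := by exact_mod_cast hA1pos
    set j₁ : ℕ := (a * (1 - G) % (A1 : ℤ)).toNat with hj₁def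
    have hj₁int : (j₁ : ℤ) = a * (1 - G) % (A1 : ℤ) :=
      Int.toNat_of_nonneg (Int.emod_nonneg _ hA1z.ne')
    have hj₁lt : j₁ < A1 := by
      have h := Int.emod_lt_of_pos (a * (1 - G)) hA1z
      omega
    have hj₁dvd : (A1 : ℤ) ∣ (G + (g : ℤ) * j₁ - 1) := by
      have hq : a * (1 - G) % (A1 : ℤ) = a * (1 - G) - (A1 : ℤ) * (a * (1 - G) / (A1 : ℤ)) :=
        Int.emod_def _ _
      refine ⟨-(b * (1 - G) + (g : ℤ) * (a * (1 - G) / (A1 : ℤ))), ?_⟩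
      rw [hj₁int, hq]
      linear_combination (1 - G) * hab
    set js : ℕ → ℕ := fun s => j₁ + s * A1 with hjs
    have hjsL : ∀ s : Fin (R + 2), js s ≤ L := by
      intro s
      have hs : (s : ℕ) ≤ R + 1 := by omega
      have h1 : js s < (R + 2) * A1 := by
        have : (s : ℕ) * A1 ≤ (R + 1) * A1 := Nat.mul_le_mul_right A1 hs
        have : js s ≤ j₁ + (R + 1) * A1 := by simp only [hjs]; omega
        have h2 : j₁ + (R + 1) * A1 < A1 + (R + 1) * A1 := by omega
        have h3 : A1 + (R + 1) * A1 = (R + 2) * A1 := by ring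
        omega
      have h2 : (R + 2) * A1 ≤ (R + 2) * A0 := Nat.mul_le_mul_left _ hA1le
      rw [hLdef]
      omega
    have hjsdvd : ∀ s : ℕ, (A1 : ℤ) ∣ (G + (g : ℤ) * (js s : ℤ) - 1) := by
      intro s
      have heq : (G + (g : ℤ) * ((js s : ℕ) : ℤ) - 1)
          = (G + (g : ℤ) * j₁ - 1) + (A1 : ℤ) * ((g : ℤ) * s) := by
        simp only [hjs]; push_cast; ring
      rw [heq]
      exact dvd_add hj₁dvd ⟨(g : ℤ) * s, rfl⟩
    have hnores : ∀ s : Fin (R + 2), ¬ IsRes (α (rr (js s))) := by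
      intro s hr
      obtain ⟨hgk, hdvdj⟩ := hkey2 (js s) (hjsL s) hr
      have hrC : rr (js s) ∈ C := by
        rw [hC]
        refine Finset.mem_filter.mpr ⟨?_, hgk⟩
        rw [hRF]; exact Finset.mem_filter.mpr ⟨Finset.mem_univ _, hr⟩
      have hnA1 : (nn (rr (js s))).natAbs ∣ A1 := Finset.dvd_prod_of_mem _ hrC
      have hnA1' : (nn (rr (js s)) : ℤ) ∣ (A1 : ℤ) :=
        Int.natAbs_dvd.mp (by exact_mod_cast hnA1)
      have hd1 : (nn (rr (js s)) : ℤ) ∣ (G + (g : ℤ) * (js s : ℤ) - 1) :=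
        dvd_trans hnA1' (hjsdvd s)
      have hone : (nn (rr (js s)) : ℤ) ∣ 1 := by
        have := dvd_sub hdvdj hd1
        simpa using this
      have h2 := (hknP _ hr).2.1
      have := Int.le_of_dvd one_pos hone
      omega
    apply final (fun s => js s) hjsL ?_ hnores
    intro s t hst
    have : (s : ℕ) * A1 = (t : ℕ) * A1 := by
      simp only [hjs] at hst; omega
    have : (s : ℕ) = (t : ℕ) := Nat.eq_of_mul_eq_mul_right hA1pos this
    exact Fin.ext this
  · -- no resonant coverage at all
    push_neg at hex
    apply final (fun s => (s : ℕ)) ?_ ?_ ?_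
    · intro s
      show (s : ℕ) ≤ L
      have h1 : (s : ℕ) < R + 2 := s.isLt
      have h2 : R + 2 ≤ L := by
        rw [hLdef]
        calc R + 2 = (R + 2) * 1 := by ring
          _ ≤ (R + 2) * A0 := Nat.mul_le_mul_left _ hA0pos
      omega
    · intro s t hst
      exact Fin.ext hst
    · intro s
      apply hex
      show (s : ℕ) ≤ L
      have h1 : (s : ℕ) < R + 2 := s.isLt
      have h2 : R + 2 ≤ L := by
        rw [hLdef]
        calc R + 2 = (R + 2) * 1 := by ring
          _ ≤ (R + 2) * A0 := Nat.mul_le_mul_left _ hA0pos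
      omega
end
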